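/- arXiv:2509.12693 — 3 statements merged into one kernel-verified Lean document; each statement's English description precedes it below -/
import Mathlib

section
/- Let q be a prime power, k < n ≤ m, α_1,...,α_n ∈ F_{q^m} linearly independent over F_q, η ∈ F_{q^m}*, 0 ≤ h ≤ k-1. Let C₁ be the one-twist twisted Gabidulin code with t = 0 as above, and for g ∈ F_{q^m}* and f ∈ P₁ (where P₁ = {∑_{i=0}^{k-1} f_i x^{q^i} + η f_h x^{q^k}}), set g(x) = g·x^{q^k} + f(x) and u_g = (g(α_1),...,g(α_n)). Then u_g is a deep hole of C₁, i.e., min over c ∈ C₁ of the rank weight of u_g - c equals the covering radius n - k of C₁. -/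
open Finset Polynomial Matrix

section Helpers

variable {Fq K : Type*} [Field Fq] [Fintype Fq] [Field K] [Fintype K] [Algebra Fq K]

lemma frob_add (q : ℕ) (hq : Fintype.card Fq = q) (i : ℕ) (x y : K) :
    (x + y) ^ q ^ i = x ^ q ^ i + y ^ q ^ i := by
  haveI : CharP Fq (ringChar Fq) := ringChar.charP Fq
  obtain ⟨t, hp, hcard⟩ := FiniteField.card Fq (ringChar Fq)
  haveI : Fact (ringChar Fq).Prime := ⟨hp⟩
  haveI : CharP K (ringChar Fq) :=
    charP_of_injective_ringHom (algebraMap Fq K).injective _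
  subst hq
  rw [hcard, ← pow_mul, add_pow_char_pow]

lemma frob_smul (q : ℕ) (hq : Fintype.card Fq = q) (i : ℕ) (a : Fq) (x : K) :
    (algebraMap Fq K a * x) ^ q ^ i = algebraMap Fq K a * x ^ q ^ i := by
  rw [mul_pow, ← map_pow]
  subst hq
  rw [FiniteField.pow_card_pow]

end Helpers

section Helpers2

variable {Fq K : Type*} [Field Fq] [Fintype Fq] [Field K] [Fintype K] [Algebra Fq K]

noncomputable def qpolyLM (q : ℕ) (hq : Fintype.card Fq = q) (b : ℕ → K) (N : ℕ) :
    K →ₗ[Fq] K where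
  toFun x := ∑ i ∈ Finset.range (N + 1), b i * x ^ q ^ i
  map_add' x y := by
    simp_rw [frob_add q hq, mul_add, Finset.sum_add_distrib]
  map_smul' a x := by
    simp only [RingHom.id_apply, Algebra.smul_def, frob_smul q hq, Finset.mul_sum]
    exact Finset.sum_congr rfl fun i _ => by ring

lemma qpolyLM_apply (q : ℕ) (hq : Fintype.card Fq = q) (b : ℕ → K) (N : ℕ) (x : K) :
    qpolyLM q hq b N x = ∑ i ∈ Finset.range (N + 1), b i * x ^ q ^ i := rfl

lemma qpoly_ker_finrank (q : ℕ) (hq : Fintype.card Fq = q) (b : ℕ → K) (N : ℕ)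
    (hb : ∃ i, i ≤ N ∧ b i ≠ 0) :
    Module.finrank Fq (LinearMap.ker (qpolyLM q hq b N)) ≤ N := by
  classical
  have hq2 : 1 < q := hq ▸ Fintype.one_lt_card
  set P : K[X] := ∑ i ∈ Finset.range (N + 1), Polynomial.C (b i) * X ^ q ^ i with hP
  have hcoeff : ∀ j, j ≤ N → P.coeff (q ^ j) = b j := by
    intro j hj
    rw [hP, Polynomial.finset_sum_coeff,
      Finset.sum_eq_single j (fun i _ hij => by
        rw [Polynomial.coeff_C_mul, Polynomial.coeff_X_pow, if_neg, mul_zero]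
        exact fun hc => hij (Nat.pow_right_injective hq2 hc.symm))
      (fun hjm => absurd (Finset.mem_range.mpr (Nat.lt_succ_of_le hj)) hjm)]
    rw [Polynomial.coeff_C_mul, Polynomial.coeff_X_pow, if_pos rfl, mul_one]
  obtain ⟨i0, hi0, hbi0⟩ := hb
  have hPne : P ≠ 0 := fun hc => hbi0 (by rw [← hcoeff i0 hi0, hc, Polynomial.coeff_zero])
  have hdeg : P.natDegree ≤ q ^ N := by
    refine Polynomial.natDegree_sum_le_of_forall_le _ _ fun i hi => ?_
    refine (Polynomial.natDegree_C_mul_le _ _).trans ?_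
    rw [Polynomial.natDegree_X_pow]
    exact Nat.pow_le_pow_right (le_of_lt hq2) (Nat.lt_succ_iff.mp (Finset.mem_range.mp hi))
  -- kernel elements are roots of P
  have hroot : ∀ x : K, x ∈ LinearMap.ker (qpolyLM q hq b N) → x ∈ P.roots.toFinset := by
    intro x hx
    rw [Multiset.mem_toFinset, Polynomial.mem_roots hPne]
    have : P.eval x = ∑ i ∈ Finset.range (N + 1), b i * x ^ q ^ i := by
      rw [hP, Polynomial.eval_finset_sum]
      exact Finset.sum_congr rfl fun i _ => by
        rw [Polynomial.eval_mul, Polynomial.eval_C, Polynomial.eval_pow, Polynomial.eval_X]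
    rw [Polynomial.IsRoot, this]
    exact hx
  have hcard : Fintype.card (LinearMap.ker (qpolyLM q hq b N)) ≤ q ^ N := by
    calc Fintype.card (LinearMap.ker (qpolyLM q hq b N))
        ≤ P.roots.toFinset.card :=
          Fintype.card_le_of_injective
            (fun x : LinearMap.ker (qpolyLM q hq b N) =>
              (⟨x.1, hroot x.1 x.2⟩ : {y // y ∈ P.roots.toFinset}))
            (fun x y hxy => Subtype.ext (by simpa using congrArg Subtype.val hxy)) |>.trans
            (le_of_eq (Fintype.card_coe _))
      _ ≤ Multiset.card P.roots := Multiset.toFinset_card_le _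
      _ ≤ P.natDegree := Polynomial.card_roots' P
      _ ≤ q ^ N := hdeg
  have := Module.card_eq_pow_finrank (K := Fq) (V := LinearMap.ker (qpolyLM q hq b N))
  rw [hq] at this
  rw [this] at hcard
  exact (Nat.pow_le_pow_iff_right hq2).mp hcard

end Helpers2

section Helpers3

variable {Fq K : Type*} [Field Fq] [Fintype Fq] [Field K] [Fintype K] [Algebra Fq K]

lemma rank_lower_bound (q : ℕ) (hq : Fintype.card Fq = q) {n N : ℕ}
    (α : ℕ → K) (hα : LinearIndependent Fq (fun i : Fin n => α (i : ℕ)))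
    (b : ℕ → K) (hb : ∃ i, i ≤ N ∧ b i ≠ 0) :
    n - N ≤ Module.finrank Fq (Submodule.span Fq (Set.range
      (fun j : Fin n => ∑ i ∈ Finset.range (N + 1), b i * α (j : ℕ) ^ q ^ i))) := by
  classical
  set T := qpolyLM q hq b N with hT
  set U := Submodule.span Fq (Set.range (fun j : Fin n => α (j : ℕ))) with hU
  have hUrank : Module.finrank Fq U = n := by
    rw [hU, finrank_span_eq_card hα, Fintype.card_fin]
  have hveq : (fun j : Fin n => ∑ i ∈ Finset.range (N + 1), b i * α (j : ℕ) ^ q ^ i)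
      = T ∘ (fun j : Fin n => α (j : ℕ)) := rfl
  have hspan : Submodule.span Fq (Set.range
      (fun j : Fin n => ∑ i ∈ Finset.range (N + 1), b i * α (j : ℕ) ^ q ^ i))
      = Submodule.map T U := by
    rw [hveq, Set.range_comp, ← Submodule.map_span]
  set T' := T.comp U.subtype with hT'
  have hrange : LinearMap.range T' = Submodule.map T U := by
    rw [hT', LinearMap.range_comp, Submodule.range_subtype]
  have hker : Module.finrank Fq (LinearMap.ker T') ≤ N := by
    have hle : Submodule.map U.subtype (LinearMap.ker T') ≤ LinearMap.ker T := by
      rintro x ⟨y, hy, rfl⟩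
      exact hy
    calc Module.finrank Fq (LinearMap.ker T')
        = Module.finrank Fq (Submodule.map U.subtype (LinearMap.ker T')) :=
          (Submodule.equivMapOfInjective U.subtype U.injective_subtype _).finrank_eq
      _ ≤ Module.finrank Fq (LinearMap.ker T) := Submodule.finrank_mono hle
      _ ≤ N := qpoly_ker_finrank q hq b N hb
  have hrn := LinearMap.finrank_range_add_finrank_ker T'
  rw [hrange, hUrank] at hrn
  rw [hspan]
  omega

end Helpers3

section Helpers4

variable {Fq K : Type*} [Field Fq] [Fintype Fq] [Field K] [Fintype K] [Algebra Fq K]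

/-- coefficient function of the coset representative -/
def coefB (k h : ℕ) (γ η : K) (e dd : ℕ → K) : ℕ → K :=
  fun i => if i < k then e i - dd i else if i = k then γ + η * (e h - dd h) else 0

lemma combo_eval {n k h : ℕ} (hh : h < k) (q : ℕ) (α : ℕ → K) (η : K)
    (γ : K) (e dd : ℕ → K) (j : Fin n) :
    (γ * α (j:ℕ) ^ q ^ k + ((∑ i ∈ Finset.range k, e i * α (j:ℕ) ^ q ^ i)
        + η * e h * α (j:ℕ) ^ q ^ k))
      - (∑ i : Fin k, dd (i:ℕ) • (fun j' : Fin n =>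
          if (i:ℕ) = h then α (j':ℕ) ^ q ^ h + η * α (j':ℕ) ^ q ^ k
          else α (j':ℕ) ^ q ^ (i:ℕ))) j
    = ∑ i ∈ Finset.range (k + 1), (coefB k h γ η e dd) i * α (j:ℕ) ^ q ^ i := by
  classical
  have hsum_apply : (∑ i : Fin k, dd (i:ℕ) • (fun j' : Fin n =>
          if (i:ℕ) = h then α (j':ℕ) ^ q ^ h + η * α (j':ℕ) ^ q ^ k
          else α (j':ℕ) ^ q ^ (i:ℕ))) j
      = ∑ i : Fin k, dd (i:ℕ) * (if (i:ℕ) = h then α (j:ℕ) ^ q ^ h + η * α (j:ℕ) ^ q ^ k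
          else α (j:ℕ) ^ q ^ (i:ℕ)) := by
    rw [Finset.sum_apply]
    exact Finset.sum_congr rfl fun i _ => rfl
  have hsplit : ∀ i : Fin k,
      dd (i:ℕ) * (if (i:ℕ) = h then α (j:ℕ) ^ q ^ h + η * α (j:ℕ) ^ q ^ k
          else α (j:ℕ) ^ q ^ (i:ℕ))
      = dd (i:ℕ) * α (j:ℕ) ^ q ^ (i:ℕ)
          + (if (i:ℕ) = h then dd h * η * α (j:ℕ) ^ q ^ k else 0) := by
    intro i
    by_cases hi : (i:ℕ) = h
    · rw [if_pos hi, if_pos hi, hi]; ring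
    · rw [if_neg hi, if_neg hi, add_zero]
  have hsum2 : ∑ i : Fin k, (if (i:ℕ) = h then dd h * η * α (j:ℕ) ^ q ^ k else 0)
      = dd h * η * α (j:ℕ) ^ q ^ k := by
    rw [Finset.sum_eq_single (⟨h, hh⟩ : Fin k)]
    · simp
    · intro i _ hi
      rw [if_neg (fun hc => hi (Fin.ext hc))]
    · intro hmem
      exact absurd (Finset.mem_univ _) hmem
  have hsum3 : ∑ i : Fin k, dd (i:ℕ) * α (j:ℕ) ^ q ^ (i:ℕ)
      = ∑ i ∈ Finset.range k, dd i * α (j:ℕ) ^ q ^ i :=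
    Fin.sum_univ_eq_sum_range (fun i => dd i * α (j:ℕ) ^ q ^ i) k
  rw [hsum_apply]
  simp_rw [hsplit]
  rw [Finset.sum_add_distrib, hsum2, hsum3]
  have hB1 : ∀ i ∈ Finset.range k, (coefB k h γ η e dd) i * α (j:ℕ) ^ q ^ i
      = e i * α (j:ℕ) ^ q ^ i - dd i * α (j:ℕ) ^ q ^ i := by
    intro i hi
    rw [coefB, if_pos (Finset.mem_range.mp hi), sub_mul]
  rw [Finset.sum_range_succ, Finset.sum_congr rfl hB1, Finset.sum_sub_distrib]
  have hBk : (coefB k h γ η e dd) k = γ + η * (e h - dd h) := by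
    rw [coefB, if_neg (lt_irrefl k), if_pos rfl]
  rw [hBk]
  ring

end Helpers4

section Helpers5

variable {Fq K : Type*} [Field Fq] [Fintype Fq] [Field K] [Fintype K] [Algebra Fq K]

lemma rows_indep (q : ℕ) (hq : Fintype.card Fq = q) {n k h : ℕ} (hkn : k < n) (hh : h < k)
    (α : ℕ → K) (hα : LinearIndependent Fq (fun i : Fin n => α (i : ℕ))) (η : K) :
    LinearIndependent K (fun i : Fin k => fun j : Fin n =>
      if (i:ℕ) = h then α (j:ℕ) ^ q ^ h + η * α (j:ℕ) ^ q ^ k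
      else α (j:ℕ) ^ q ^ (i:ℕ)) := by
  classical
  rw [Fintype.linearIndependent_iff]
  intro d hd
  by_contra hne
  push_neg at hne
  obtain ⟨i0, hi0⟩ := hne
  set dd : ℕ → K := fun i => if hik : i < k then d ⟨i, hik⟩ else 0 with hdd
  have hddeq : ∀ i : Fin k, dd (i:ℕ) = d i := by
    intro i
    rw [hdd]
    simp only [dif_pos i.isLt, Fin.eta]
  set b := coefB k h 0 η (fun _ => (0:K)) dd with hb
  have hbne : ∃ i, i ≤ k ∧ b i ≠ 0 := by
    refine ⟨(i0:ℕ), le_of_lt (lt_of_lt_of_le i0.isLt le_rfl), ?_⟩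
    rw [hb, coefB]
    rw [if_pos i0.isLt, hddeq i0]
    simpa using hi0
  have hsum0 : (∑ i : Fin k, dd (i:ℕ) • (fun j' : Fin n =>
      if (i:ℕ) = h then α (j':ℕ) ^ q ^ h + η * α (j':ℕ) ^ q ^ k
      else α (j':ℕ) ^ q ^ (i:ℕ))) = 0 := by
    rw [← hd]
    exact Finset.sum_congr rfl fun i _ => by rw [hddeq i]
  have h0 : ∀ j : Fin n, ∑ i ∈ Finset.range (k + 1), b i * α (j:ℕ) ^ q ^ i = 0 := by
    intro j
    rw [hb, ← combo_eval hh q α η 0 (fun _ => (0:K)) dd j, hsum0]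
    simp
  have hUle : Submodule.span Fq (Set.range (fun j : Fin n => α (j:ℕ)))
      ≤ LinearMap.ker (qpolyLM q hq b k) := by
    rw [Submodule.span_le]
    rintro x ⟨j, rfl⟩
    exact h0 j
  have hcontra : n ≤ k := by
    calc n = Module.finrank Fq (Submodule.span Fq (Set.range (fun j : Fin n => α (j:ℕ)))) := by
          rw [finrank_span_eq_card hα, Fintype.card_fin]
      _ ≤ Module.finrank Fq (LinearMap.ker (qpolyLM q hq b k)) := Submodule.finrank_mono hUle
      _ ≤ k := qpoly_ker_finrank q hq b k hbne
  omega

end Helpers5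

/-- for `g(x) = g·x^{q^k} + f(x)` with `g ≠ 0` and `f ∈ P₁`, the vector
`u_g = (g(α_1),…,g(α_n))` is a deep hole of the one-twist twisted Gabidulin code `C₁`
(with `t = 0`): its rank distance to `C₁` equals the covering radius `n - k`. -/
theorem C1_deep_hole {Fq K : Type*} [Field Fq] [Fintype Fq] [Field K] [Fintype K]
    [Algebra Fq K] (q m n k h : ℕ) (hq : Fintype.card Fq = q) (hK : Fintype.card K = q ^ m)
    (hkn : k < n) (hnm : n ≤ m) (hh : h < k)
    (α : ℕ → K) (hα : LinearIndependent Fq (fun i : Fin n => α (i:ℕ)))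
    (η : K) (hη : η ≠ 0) (g : K) (hg : g ≠ 0) (fc : ℕ → K) :
    sInf {w : ℕ | ∃ c ∈ Submodule.span K (Set.range (fun i : Fin k => fun j : Fin n =>
          if (i:ℕ) = h then α (j:ℕ) ^ q ^ h + η * α (j:ℕ) ^ q ^ k
          else α (j:ℕ) ^ q ^ (i:ℕ))),
        w = Module.finrank Fq (Submodule.span Fq (Set.range
          ((fun j : Fin n => g * α (j:ℕ) ^ q ^ k +
            ((∑ i ∈ Finset.range k, fc i * α (j:ℕ) ^ q ^ i) + η * fc h * α (j:ℕ) ^ q ^ k))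
            - c)))} = n - k := by
  classical
  set R : Fin k → Fin n → K := fun i j => if (i:ℕ) = h then α (j:ℕ) ^ q ^ h + η * α (j:ℕ) ^ q ^ k
      else α (j:ℕ) ^ q ^ (i:ℕ) with hRdef
  set u : Fin n → K := fun j => g * α (j:ℕ) ^ q ^ k +
      ((∑ i ∈ Finset.range k, fc i * α (j:ℕ) ^ q ^ i) + η * fc h * α (j:ℕ) ^ q ^ k) with hudef
  set S : Set ℕ := {w : ℕ | ∃ c ∈ Submodule.span K (Set.range R),
      w = Module.finrank Fq (Submodule.span Fq (Set.range (u - c)))} with hSdef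
  -- key rewriting for any coefficient family d
  have hkey : ∀ d : Fin k → K,
      u - (∑ i : Fin k, d i • R i) = fun j : Fin n =>
        ∑ i ∈ Finset.range (k + 1),
          (coefB k h g η fc (fun i => if hik : i < k then d ⟨i, hik⟩ else 0)) i
            * α (j:ℕ) ^ q ^ i := by
    intro d
    funext j
    have hddeq : (∑ i : Fin k, d i • R i)
        = ∑ i : Fin k, (fun i' => if hik : i' < k then d ⟨i', hik⟩ else 0) (i:ℕ) •
            (fun j' : Fin n =>
              if (i:ℕ) = h then α (j':ℕ) ^ q ^ h + η * α (j':ℕ) ^ q ^ k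
              else α (j':ℕ) ^ q ^ (i:ℕ)) := by
      refine Finset.sum_congr rfl fun i _ => ?_
      rw [hRdef]
      simp only [dif_pos i.isLt, Fin.eta]
    rw [Pi.sub_apply, hddeq, hudef]
    exact combo_eval hh q α η g fc (fun i' => if hik : i' < k then d ⟨i', hik⟩ else 0) j
  -- nonzero coefficients
  have hbne : ∀ dd : ℕ → K, ∃ i, i ≤ k ∧ coefB k h g η fc dd i ≠ 0 := by
    intro dd
    by_cases hch : fc h - dd h = 0
    · refine ⟨k, le_rfl, ?_⟩
      rw [coefB, if_neg (lt_irrefl k), if_pos rfl, hch, mul_zero, add_zero]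
      exact hg
    · exact ⟨h, le_of_lt hh, by rw [coefB, if_pos hh]; exact hch⟩
  -- lower bound
  have hlow : ∀ w ∈ S, n - k ≤ w := by
    rintro w ⟨c, hc, rfl⟩
    obtain ⟨d, hdsum⟩ := (Submodule.mem_span_range_iff_exists_fun K).mp hc
    rw [← hdsum, hkey d]
    exact rank_lower_bound q hq α hα _ (hbne _)
  -- upper bound : construct c
  have hRli : LinearIndependent K R := by
    rw [hRdef]; exact rows_indep q hq hkn hh α hα η
  set M : Matrix (Fin k) (Fin n) K := Matrix.of R with hM
  have hMrank : M.rank = k := by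
    have := LinearIndependent.rank_matrix (M := M) hRli
    rwa [Fintype.card_fin] at this
  have hcols : Submodule.span K (Set.range Mᵀ) = ⊤ := by
    apply Submodule.eq_top_of_finrank_eq
    rw [show Set.range Mᵀ = Set.range M.col from rfl,
      ← Matrix.rank_eq_finrank_span_cols, hMrank, Module.finrank_fintype_fun_eq_card,
      Fintype.card_fin]
  obtain ⟨bs, hbsub, hbspan, hbli⟩ := exists_linearIndependent K (Set.range Mᵀ)
  rw [hcols] at hbspan
  haveI : Fintype bs := (Set.toFinite bs).fintype
  have hbcard : Fintype.card bs = k := by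
    rw [← Set.toFinset_card, ← finrank_span_set_eq_card hbli, hbspan, finrank_top,
      Module.finrank_fintype_fun_eq_card, Fintype.card_fin]
  set e : Fin k ≃ bs := (Fintype.equivFinOfCardEq hbcard).symm with he
  have hex : ∀ l : Fin k, ∃ j : Fin n, Mᵀ j = (e l : Fin k → K) := fun l => hbsub (e l).2
  set σ : Fin k → Fin n := fun l => Classical.choose (hex l) with hσdef
  have hσ : ∀ l, Mᵀ (σ l) = (e l : Fin k → K) := fun l => Classical.choose_spec (hex l)
  have hA : LinearIndependent K (fun l => Mᵀ (σ l)) := by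
    have hfe : (fun l => Mᵀ (σ l)) = (Subtype.val ∘ e) := funext fun l => hσ l
    rw [hfe]
    exact hbli.comp e e.injective
  have hAunit : IsUnit (Matrix.of (fun l => Mᵀ (σ l))) :=
    Matrix.linearIndependent_rows_iff_isUnit.mp hA
  obtain ⟨d, hd⟩ := Matrix.mulVec_surjective_iff_isUnit.mpr hAunit (fun l => u (σ l))
  set c : Fin n → K := ∑ i : Fin k, d i • R i with hc
  have hcmem : c ∈ Submodule.span K (Set.range R) :=
    Submodule.sum_mem _ fun i _ =>
      Submodule.smul_mem _ _ (Submodule.subset_span ⟨i, rfl⟩)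
  have hσinj : Function.Injective σ := by
    intro a b hab
    have h1 := hσ a
    rw [hab, hσ b] at h1
    exact e.injective (Subtype.ext h1.symm)
  have hzero : ∀ l : Fin k, (u - c) (σ l) = 0 := by
    intro l
    have h1 : (Matrix.of (fun l => Mᵀ (σ l))).mulVec d l = u (σ l) := congrFun hd l
    rw [Matrix.mulVec, dotProduct] at h1
    have h2 : ∀ i : Fin k, (Matrix.of (fun l => Mᵀ (σ l))) l i * d i = d i * R i (σ l) := by
      intro i
      rw [Matrix.of_apply, Matrix.transpose_apply, hM, Matrix.of_apply, mul_comm]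
    rw [Finset.sum_congr rfl (fun i _ => h2 i)] at h1
    rw [Pi.sub_apply, hc, Finset.sum_apply]
    rw [sub_eq_zero, ← h1]
    exact Finset.sum_congr rfl fun i _ => rfl
  set T : Finset (Fin n) := Finset.image σ Finset.univ with hT
  have hTcard : T.card = k := by
    rw [hT, Finset.card_image_of_injective _ hσinj, Finset.card_univ, Fintype.card_fin]
  have hrange_sub : Set.range (u - c) ⊆ insert (0 : K) ((u - c) '' ↑Tᶜ) := by
    rintro x ⟨j, rfl⟩
    by_cases hj : j ∈ T
    · obtain ⟨l, _, rfl⟩ := Finset.mem_image.mp hj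
      rw [hzero l]
      exact Set.mem_insert _ _
    · exact Set.mem_insert_of_mem _ ⟨j, by simpa using hj, rfl⟩
  have hup : Module.finrank Fq (Submodule.span Fq (Set.range (u - c))) ≤ n - k := by
    calc Module.finrank Fq (Submodule.span Fq (Set.range (u - c)))
        ≤ Module.finrank Fq (Submodule.span Fq (insert (0:K) ((u - c) '' ↑Tᶜ))) :=
          Submodule.finrank_mono (Submodule.span_mono hrange_sub)
      _ = Module.finrank Fq (Submodule.span Fq ((u - c) '' ↑Tᶜ)) := by
          rw [Submodule.span_insert_zero]
      _ ≤ ((u - c) '' ↑Tᶜ).toFinset.card := finrank_span_le_card _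
      _ ≤ Tᶜ.card := by
          rw [Set.toFinset_image, Finset.toFinset_coe]
          exact Finset.card_image_le
      _ = n - k := by rw [Finset.card_compl, hTcard, Fintype.card_fin]
  have hmemval : Module.finrank Fq (Submodule.span Fq (Set.range (u - c))) ∈ S :=
    ⟨c, hcmem, rfl⟩
  have heq : Module.finrank Fq (Submodule.span Fq (Set.range (u - c))) = n - k :=
    le_antisymm hup (hlow _ hmemval)
  have hmem : (n - k) ∈ S := heq ▸ hmemval
  exact le_antisymm (Nat.sInf_le hmem) (le_csInf ⟨n - k, hmem⟩ hlow)
end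

section
/- Let q be a prime power, k < n ≤ m, α_1,...,α_n ∈ F_{q^m} linearly independent over F_q, η ∈ F_{q^m}*, 0 ≤ h ≤ k-1, 0 ≤ t ≤ n-k-1. For a k-subset I of {1,...,n}, let g_h^{(t)}(I) be the scalar satisfying det(M_I^{(h,k+t)}) = g_h^{(t)}(I)·det(M_I), where M_I is the k×k Moore matrix of (α_i)_{i ∈ I} and M_I^{(h,k+t)} has row h replaced by the q^{k+t}-powers. Then the twisted Gabidulin code C₁ (with one twist η at row h, exponent k+t) is MDS in the Hamming metric if and only if η^{-1} ≠ -g_h^{(t)}(I) for every k-subset I of {1,...,n}. -/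
open Finset

section Aux

open Polynomial in
/-- Key lemma: a `q`-linearized polynomial with exponents `q^0,...,q^(s-1)` that vanishes
at `s` points that are linearly independent over `Fq` (with `#Fq = q`) has all
coefficients zero. -/
lemma key_li {Fq K : Type*} [Field Fq] [Fintype Fq] [Field K] [Fintype K] [Algebra Fq K]
    (q : ℕ) (hq : Fintype.card Fq = q) {s : ℕ} (β : Fin s → K)
    (hβ : LinearIndependent Fq β) (c : Fin s → K)
    (h0 : ∀ j, ∑ i, c i * β j ^ q ^ (i : ℕ) = 0) : ∀ i, c i = 0 := by
  classical
  intro i0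
  have hs : 0 < s := i0.pos
  set p := ringChar Fq with hpdef
  haveI : CharP Fq p := ringChar.charP Fq
  obtain ⟨a, hp, hcard⟩ := FiniteField.card Fq p
  haveI : Fact p.Prime := ⟨hp⟩
  haveI : CharP K p := charP_of_injective_algebraMap (algebraMap Fq K).injective p
  have hqpa : q = p ^ (a : ℕ) := by rw [← hq, hcard]
  have hq2 : 2 ≤ q := by rw [← hq]; exact Fintype.one_lt_card
  set P : K[X] := ∑ i : Fin s, Polynomial.monomial (q ^ (i : ℕ)) (c i) with hP
  have heval : ∀ x : K, P.eval x = ∑ i : Fin s, c i * x ^ q ^ (i : ℕ) := by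
    intro x
    rw [hP, Polynomial.eval_finset_sum]
    simp [Polynomial.eval_monomial]
  have hfrob : ∀ (x y : K) (e : ℕ), (x + y) ^ q ^ e = x ^ q ^ e + y ^ q ^ e := by
    intro x y e
    rw [hqpa, ← pow_mul]
    exact add_pow_char_pow x y p (a * e)
  have hscal : ∀ (l : Fq) (e : ℕ), (algebraMap Fq K l) ^ q ^ e = algebraMap Fq K l := by
    intro l e
    rw [← map_pow, ← hq, FiniteField.pow_card_pow]
  let N : Submodule Fq K :=
    { carrier := {x | P.eval x = 0}
      add_mem' := by
        intro x y hx hy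
        simp only [Set.mem_setOf_eq, heval] at *
        calc ∑ i : Fin s, c i * (x + y) ^ q ^ (i : ℕ)
            = ∑ i : Fin s, (c i * x ^ q ^ (i : ℕ) + c i * y ^ q ^ (i : ℕ)) := by
              refine Finset.sum_congr rfl fun i _ => ?_
              rw [hfrob, mul_add]
          _ = 0 := by rw [Finset.sum_add_distrib, hx, hy, add_zero]
      zero_mem' := by
        simp only [Set.mem_setOf_eq, heval]
        refine Finset.sum_eq_zero fun i _ => ?_
        rw [zero_pow (pow_ne_zero _ (by omega)), mul_zero]
      smul_mem' := by
        intro l x hx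
        simp only [Set.mem_setOf_eq, heval] at *
        have : ∀ i : Fin s, c i * (l • x) ^ q ^ (i : ℕ)
            = algebraMap Fq K l * (c i * x ^ q ^ (i : ℕ)) := by
          intro i
          rw [Algebra.smul_def, mul_pow, hscal]; ring
        rw [Finset.sum_congr rfl fun i _ => this i, ← Finset.mul_sum, hx, mul_zero] }
  have hspan : Submodule.span Fq (Set.range β) ≤ N := by
    rw [Submodule.span_le]
    rintro x ⟨j, rfl⟩
    show P.eval (β j) = 0
    rw [heval]; exact h0 j
  haveI : Fintype (Submodule.span Fq (Set.range β)) := Fintype.ofFinite _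
  have hcardspan : Fintype.card (Submodule.span Fq (Set.range β)) = q ^ s := by
    rw [Module.card_eq_pow_finrank (K := Fq), hq, finrank_span_eq_card hβ, Fintype.card_fin]
  have hdeg : P.natDegree < q ^ s := by
    have : P.natDegree ≤ q ^ (s - 1) := by
      refine (Polynomial.natDegree_sum_le _ _).trans ?_
      rw [Finset.fold_max_le]
      constructor
      · positivity
      · intro i _
        exact (Polynomial.natDegree_monomial_le _).trans
          (Nat.pow_le_pow_right (by omega) (by omega))
    calc P.natDegree ≤ q ^ (s - 1) := this
      _ < q ^ s := Nat.pow_lt_pow_right (by omega) (by omega)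
  have hPzero : P = 0 := by
    refine Polynomial.eq_zero_of_natDegree_lt_card_of_eval_eq_zero P
      (f := fun x : Submodule.span Fq (Set.range β) => (x : K)) Subtype.val_injective
      (fun x => hspan x.2) ?_
    rw [hcardspan]; exact hdeg
  have hcoeff : P.coeff (q ^ (i0 : ℕ)) = c i0 := by
    rw [hP, Polynomial.finset_sum_coeff]
    rw [Finset.sum_eq_single i0]
    · simp [Polynomial.coeff_monomial]
    · intro i _ hne
      rw [Polynomial.coeff_monomial, if_neg]
      intro hcontra
      exact hne (Fin.ext (Nat.pow_right_injective hq2 hcontra))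
    · simp
  rw [← hcoeff, hPzero, Polynomial.coeff_zero]

/-- The Moore matrix of linearly independent elements has nonzero determinant. -/
lemma moore_det_ne_zero {Fq K : Type*} [Field Fq] [Fintype Fq] [Field K] [Fintype K]
    [DecidableEq K] [Algebra Fq K] (q : ℕ) (hq : Fintype.card Fq = q) {k : ℕ}
    (β : Fin k → K) (hβ : LinearIndependent Fq β) :
    Matrix.det (Matrix.of fun i j : Fin k => β j ^ q ^ (i : ℕ)) ≠ 0 := by
  intro hdet
  obtain ⟨v, hv0, hv⟩ := Matrix.exists_vecMul_eq_zero_iff.mpr hdet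
  refine hv0 (funext fun i => ?_)
  refine key_li q hq β hβ v (fun j => ?_) i
  have := congrFun hv j
  simpa [Matrix.vecMul, dotProduct] using this

/-- Multilinearity: determinant of the one-twist matrix splits. -/
lemma det_twist {K : Type*} [CommRing K] {k : ℕ} (h : ℕ) (hh : h < k) (q e1 : ℕ)
    (η : K) (β : Fin k → K) :
    Matrix.det (Matrix.of fun i j : Fin k =>
        if (i:ℕ) = h then β j ^ q ^ h + η * β j ^ q ^ e1 else β j ^ q ^ (i:ℕ)) =
      Matrix.det (Matrix.of fun i j : Fin k => β j ^ q ^ (i:ℕ)) +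
      η * Matrix.det (Matrix.of fun i j : Fin k =>
        if (i:ℕ) = h then β j ^ q ^ e1 else β j ^ q ^ (i:ℕ)) := by
  classical
  set h' : Fin k := ⟨h, hh⟩ with hh'
  set B : Matrix (Fin k) (Fin k) K := Matrix.of fun i j : Fin k => β j ^ q ^ (i:ℕ) with hB
  have hcond : ∀ i : Fin k, ((i:ℕ) = h) ↔ (i = h') := by
    intro i
    constructor
    · intro hi; exact Fin.ext hi
    · intro hi; rw [hi]
  have hGI : (Matrix.of fun i j : Fin k =>
      if (i:ℕ) = h then β j ^ q ^ h + η * β j ^ q ^ e1 else β j ^ q ^ (i:ℕ)) =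
      Matrix.updateRow B h' ((fun j => β j ^ q ^ h) + η • fun j => β j ^ q ^ e1) := by
    ext i j
    simp only [Matrix.of_apply]
    rw [Matrix.updateRow_apply]
    by_cases hi : i = h'
    · rw [if_pos ((hcond i).mpr hi), if_pos hi]
      simp [hi, hh']
    · rw [if_neg (fun hc => hi ((hcond i).mp hc)), if_neg hi]
      simp [hB]
  have hA : (Matrix.of fun i j : Fin k =>
      if (i:ℕ) = h then β j ^ q ^ e1 else β j ^ q ^ (i:ℕ)) =
      Matrix.updateRow B h' (fun j => β j ^ q ^ e1) := by
    ext i j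
    simp only [Matrix.of_apply]
    rw [Matrix.updateRow_apply]
    by_cases hi : i = h'
    · rw [if_pos ((hcond i).mpr hi), if_pos hi]
    · rw [if_neg (fun hc => hi ((hcond i).mp hc)), if_neg hi]
      simp [hB]
  have hrow : (fun j => β j ^ q ^ h) = B h' := by
    funext j
    simp [hB, hh']
  rw [hGI, hA, Matrix.det_updateRow_add, Matrix.det_updateRow_smul, hrow,
    Matrix.updateRow_eq_self]

/-- The rows of the twisted generator matrix are linearly independent. -/
lemma twist_rank {Fq K : Type*} [Field Fq] [Fintype Fq] [Field K] [Fintype K] [Algebra Fq K]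
    (q : ℕ) (hq : Fintype.card Fq = q) {n k h t : ℕ} (hh : h < k) (hkt : k + t < n)
    (α : ℕ → K) (hα : LinearIndependent Fq (fun i : Fin n => α (i:ℕ))) (η : K)
    (x : Fin k → K)
    (hx : ∀ j : Fin n, ∑ i : Fin k, x i *
      (if (i:ℕ) = h then α (j:ℕ) ^ q ^ h + η * α (j:ℕ) ^ q ^ (k + t)
       else α (j:ℕ) ^ q ^ (i:ℕ)) = 0) : x = 0 := by
  classical
  have hkn : k ≤ n := by omega
  set c'' : ℕ → K := fun e => if he : e < k then x ⟨e, he⟩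
      else if e = k + t then η * x ⟨h, hh⟩ else 0 with hc''
  have hcond : ∀ i : Fin k, ((i:ℕ) = h) ↔ (i = ⟨h, hh⟩) :=
    fun i => ⟨fun hi => Fin.ext hi, fun hi => by rw [hi]⟩
  have hzero : ∀ j : Fin n, ∑ e : Fin n, c'' (e:ℕ) * α (j:ℕ) ^ q ^ (e:ℕ) = 0 := by
    intro j
    have hsplit : ∑ i : Fin k, x i *
        (if (i:ℕ) = h then α (j:ℕ) ^ q ^ h + η * α (j:ℕ) ^ q ^ (k + t)
         else α (j:ℕ) ^ q ^ (i:ℕ))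
        = (∑ i : Fin k, x i * α (j:ℕ) ^ q ^ (i:ℕ))
          + η * x ⟨h, hh⟩ * α (j:ℕ) ^ q ^ (k + t) := by
      have hterm : ∀ i : Fin k, x i *
          (if (i:ℕ) = h then α (j:ℕ) ^ q ^ h + η * α (j:ℕ) ^ q ^ (k + t)
           else α (j:ℕ) ^ q ^ (i:ℕ))
          = x i * α (j:ℕ) ^ q ^ (i:ℕ)
            + (if i = ⟨h, hh⟩ then η * x i * α (j:ℕ) ^ q ^ (k + t) else 0) := by
        intro i
        by_cases hi : (i:ℕ) = h
        · rw [if_pos hi, if_pos ((hcond i).mp hi)]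
          simp only [hi]
          ring
        · rw [if_neg hi, if_neg (fun hc => hi ((hcond i).mpr hc)), add_zero]
      rw [Finset.sum_congr rfl fun i _ => hterm i, Finset.sum_add_distrib]
      congr 1
      rw [Finset.sum_ite_eq' Finset.univ (⟨h, hh⟩ : Fin k)
        (fun i => η * x i * α (j:ℕ) ^ q ^ (k + t))]
      simp [mul_assoc, mul_comm, mul_left_comm]
    have hL : ∑ e : Fin n, c'' (e:ℕ) * α (j:ℕ) ^ q ^ (e:ℕ)
        = (∑ i : Fin k, x i * α (j:ℕ) ^ q ^ (i:ℕ))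
          + η * x ⟨h, hh⟩ * α (j:ℕ) ^ q ^ (k + t) := by
      rw [Fin.sum_univ_eq_sum_range (fun e => c'' e * α (j:ℕ) ^ q ^ e) n]
      rw [Finset.range_eq_Ico, ← Finset.sum_Ico_consecutive _ (Nat.zero_le k) hkn]
      congr 1
      · rw [← Finset.range_eq_Ico, ← Fin.sum_univ_eq_sum_range
          (fun e => c'' e * α (j:ℕ) ^ q ^ e) k]
        refine Finset.sum_congr rfl fun i _ => ?_
        simp [hc'', i.isLt]
      · rw [Finset.sum_eq_single_of_mem (k + t)
          (Finset.mem_Ico.mpr ⟨Nat.le_add_right k t, hkt⟩)]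
        · simp only [hc'']
          rw [dif_neg (by omega : ¬ k + t < k)]
          simp only [if_true]
        · intro b hb hbne
          have hbk : ¬ b < k := by
            have := (Finset.mem_Ico.mp hb).1; omega
          simp only [hc'']
          rw [dif_neg hbk, if_neg hbne, zero_mul]
    rw [hL, ← hsplit]
    exact hx j
  have hall := key_li q hq (fun i : Fin n => α (i:ℕ)) hα (fun e : Fin n => c'' (e:ℕ)) hzero
  funext i
  have := hall ⟨(i:ℕ), lt_of_lt_of_le i.isLt hkn⟩
  simpa [hc'', i.isLt] using this

end Aux

/-- the one-twist twisted Gabidulin code `C₁` is MDS in the Hamming metric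
(minimum Hamming distance `n - k + 1`) iff `η⁻¹ ≠ -g_h^{(t)}(I)` for every `k`-subset `I`
of the column set, where `g_h^{(t)}(I)` is the scalar with
`det(M_I^{(h,k+t)}) = g_h^{(t)}(I)·det(M_I)`. -/
theorem C1_MDS_iff {Fq K : Type*} [Field Fq] [Fintype Fq] [Field K] [Fintype K] [DecidableEq K]
    [Algebra Fq K] (q m n k h t : ℕ) (hq : Fintype.card Fq = q) (hK : Fintype.card K = q ^ m)
    (hkn : k < n) (hnm : n ≤ m) (hh : h < k) (ht : t < n - k)
    (α : ℕ → K) (hα : LinearIndependent Fq (fun i : Fin n => α (i:ℕ)))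
    (η : K) (hη : η ≠ 0) :
    (sInf {w : ℕ | ∃ c ∈ Submodule.span K (Set.range (fun i : Fin k => fun j : Fin n =>
          if (i:ℕ) = h then α (j:ℕ) ^ q ^ h + η * α (j:ℕ) ^ q ^ (k + t)
          else α (j:ℕ) ^ q ^ (i:ℕ))),
        c ≠ 0 ∧ w = hammingNorm c} = n - k + 1)
    ↔
    (∀ (I : Finset (Fin n)) (hI : I.card = k) (gI : K),
      Matrix.det (Matrix.of fun i j : Fin k =>
          if (i:ℕ) = h then α (((I.orderIsoOfFin hI j : I) : Fin n) : ℕ) ^ q ^ (k + t)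
          else α (((I.orderIsoOfFin hI j : I) : Fin n) : ℕ) ^ q ^ (i:ℕ)) =
        gI * Matrix.det (Matrix.of fun i j : Fin k =>
          α (((I.orderIsoOfFin hI j : I) : Fin n) : ℕ) ^ q ^ (i:ℕ)) →
      η⁻¹ ≠ -gI) := by
  classical
  have hkt : k + t < n := by omega
  set Grow : Fin k → (Fin n → K) := fun i j =>
    if (i:ℕ) = h then α (j:ℕ) ^ q ^ h + η * α (j:ℕ) ^ q ^ (k + t)
    else α (j:ℕ) ^ q ^ (i:ℕ) with hGrow
  set G : Matrix (Fin k) (Fin n) K := Matrix.of Grow with hG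
  set D : Set ℕ := {w : ℕ | ∃ c ∈ Submodule.span K (Set.range Grow),
      c ≠ 0 ∧ w = hammingNorm c} with hD
  have hsum : ∀ x : Fin k → K, (∑ i, x i • Grow i) = Matrix.vecMul x G := by
    intro x; funext j
    simp [Matrix.vecMul, dotProduct, Finset.sum_apply, hG]
  have hspan_iff : ∀ c : Fin n → K, c ∈ Submodule.span K (Set.range Grow) ↔
      ∃ x : Fin k → K, Matrix.vecMul x G = c := by
    intro c
    rw [Submodule.mem_span_range_iff_exists_fun]
    exact exists_congr fun x => by rw [hsum]
  have hrank : ∀ x : Fin k → K, Matrix.vecMul x G = 0 → x = 0 := by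
    intro x hx
    refine twist_rank q hq hh hkt α hα η x (fun j => ?_)
    have := congrFun hx j
    simpa [Matrix.vecMul, dotProduct, hG, hGrow] using this
  -- minor determinant formula
  have hGIdet : ∀ (I : Finset (Fin n)) (hI : I.card = k),
      Matrix.det (Matrix.of fun i j : Fin k =>
        G i (((I.orderIsoOfFin hI j : I) : Fin n))) =
      Matrix.det (Matrix.of fun i j : Fin k =>
          α (((I.orderIsoOfFin hI j : I) : Fin n) : ℕ) ^ q ^ (i:ℕ)) +
      η * Matrix.det (Matrix.of fun i j : Fin k =>
          if (i:ℕ) = h then α (((I.orderIsoOfFin hI j : I) : Fin n) : ℕ) ^ q ^ (k + t)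
          else α (((I.orderIsoOfFin hI j : I) : Fin n) : ℕ) ^ q ^ (i:ℕ)) := by
    intro I hI
    have := det_twist h hh q (k + t) η
      (fun j : Fin k => α (((I.orderIsoOfFin hI j : I) : Fin n) : ℕ))
    rw [← this]
    rfl
  have hmemI : ∀ (I : Finset (Fin n)) (hI : I.card = k) (j : Fin k),
      ((I.orderIsoOfFin hI j : I) : Fin n) ∈ I := fun I hI j => (I.orderIsoOfFin hI j).2
  have hsurjI : ∀ (I : Finset (Fin n)) (hI : I.card = k) (j' : Fin n), j' ∈ I →
      ∃ j : Fin k, ((I.orderIsoOfFin hI j : I) : Fin n) = j' := by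
    intro I hI j' hj'
    obtain ⟨j, hj⟩ := (I.orderIsoOfFin hI).surjective ⟨j', hj'⟩
    exact ⟨j, by rw [hj]⟩
  constructor
  · -- MDS → condition on minors
    intro hInf I hI gI hgI hcontra
    have hηg : η * gI = -1 := by
      have hgI' : gI = -η⁻¹ := by rw [← neg_neg gI, ← hcontra]
      rw [hgI']
      field_simp
    have hdet0 : Matrix.det (Matrix.of fun i j : Fin k =>
        G i (((I.orderIsoOfFin hI j : I) : Fin n))) = 0 := by
      rw [hGIdet I hI, hgI, ← mul_assoc, hηg]
      ring
    obtain ⟨v, hv0, hv⟩ := Matrix.exists_vecMul_eq_zero_iff.mpr hdet0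
    have hcmem : Matrix.vecMul v G ∈ Submodule.span K (Set.range Grow) :=
      (hspan_iff _).mpr ⟨v, rfl⟩
    have hcne : Matrix.vecMul v G ≠ 0 := fun h0 => hv0 (hrank v h0)
    have hczero : ∀ j' ∈ I, Matrix.vecMul v G j' = 0 := by
      intro j' hj'
      obtain ⟨j, hj⟩ := hsurjI I hI j' hj'
      have := congrFun hv j
      rw [← hj]
      simpa [Matrix.vecMul, dotProduct] using this
    have hw : hammingNorm (Matrix.vecMul v G) ≤ n - k := by
      have hsub : ({j | Matrix.vecMul v G j ≠ 0} : Finset (Fin n)) ⊆ Iᶜ := by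
        intro j hj
        simp only [Finset.mem_filter, Finset.mem_univ, true_and] at hj
        rw [Finset.mem_compl]
        exact fun hmem => hj (hczero j hmem)
      calc hammingNorm (Matrix.vecMul v G)
          ≤ (Iᶜ).card := Finset.card_le_card hsub
        _ = n - k := by rw [Finset.card_compl, hI, Fintype.card_fin]
    have hle : sInf D ≤ n - k :=
      le_trans (Nat.sInf_le ⟨Matrix.vecMul v G, hcmem, hcne, rfl⟩) hw
    rw [hInf] at hle
    omega
  · -- condition on minors → MDS
    intro hRHS
    have hdetne : ∀ (I : Finset (Fin n)) (hI : I.card = k),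
        Matrix.det (Matrix.of fun i j : Fin k =>
          G i (((I.orderIsoOfFin hI j : I) : Fin n))) ≠ 0 := by
      intro I hI
      have hB : Matrix.det (Matrix.of fun i j : Fin k =>
          α (((I.orderIsoOfFin hI j : I) : Fin n) : ℕ) ^ q ^ (i:ℕ)) ≠ 0 := by
        refine moore_det_ne_zero q hq _ ?_
        exact hα.comp (fun j : Fin k => ((I.orderIsoOfFin hI j : I) : Fin n))
          (fun a b hab => (OrderIso.injective _) (Subtype.ext hab))
      set dA := Matrix.det (Matrix.of fun i j : Fin k =>
          if (i:ℕ) = h then α (((I.orderIsoOfFin hI j : I) : Fin n) : ℕ) ^ q ^ (k + t)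
          else α (((I.orderIsoOfFin hI j : I) : Fin n) : ℕ) ^ q ^ (i:ℕ)) with hdA
      set dB := Matrix.det (Matrix.of fun i j : Fin k =>
          α (((I.orderIsoOfFin hI j : I) : Fin n) : ℕ) ^ q ^ (i:ℕ)) with hdB
      have hg : dA = (dA / dB) * dB := by field_simp
      have hne := hRHS I hI (dA / dB) hg
      have h1 : (1 : K) + η * (dA / dB) ≠ 0 := by
        intro hc
        apply hne
        have hmul : η * -(dA / dB) = 1 := by linear_combination -hc
        exact (inv_eq_of_mul_eq_one_right hmul)
      rw [hGIdet I hI, ← hdA, ← hdB]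
      have hfact : dB + η * dA = (1 + η * (dA / dB)) * dB := by
        field_simp
      rw [hfact]
      exact mul_ne_zero h1 hB
    have hlow : ∀ (x : Fin k → K), Matrix.vecMul x G ≠ 0 →
        n - k + 1 ≤ hammingNorm (Matrix.vecMul x G) := by
      intro x hc0
      by_contra hlt
      push_neg at hlt
      have hsupp : ({j | Matrix.vecMul x G j ≠ 0} : Finset (Fin n)).card ≤ n - k := by
        have : hammingNorm (Matrix.vecMul x G) =
            ({j | Matrix.vecMul x G j ≠ 0} : Finset (Fin n)).card := rfl
        omega
      have hcompl : k ≤ (({j | Matrix.vecMul x G j ≠ 0} : Finset (Fin n))ᶜ).card := by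
        rw [Finset.card_compl, Fintype.card_fin]
        omega
      obtain ⟨I, hIsub, hI⟩ := Finset.exists_subset_card_eq hcompl
      have hvz : Matrix.vecMul x (Matrix.of fun i j : Fin k =>
          G i (((I.orderIsoOfFin hI j : I) : Fin n))) = 0 := by
        funext j
        have hmem := hIsub (hmemI I hI j)
        rw [Finset.mem_compl, Finset.mem_filter] at hmem
        have hzero : Matrix.vecMul x G (((I.orderIsoOfFin hI j : I) : Fin n)) = 0 := by
          by_contra hne
          exact hmem ⟨Finset.mem_univ _, hne⟩
        simpa [Matrix.vecMul, dotProduct] using hzero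
      have hx0 : x = 0 := by
        by_contra hx0
        exact hdetne I hI (Matrix.exists_vecMul_eq_zero_iff.mp ⟨x, hx0, hvz⟩)
      apply hc0
      rw [hx0, Matrix.zero_vecMul]
    -- a codeword of weight exactly n - k + 1
    obtain ⟨I0, hI0sub, hI0⟩ := Finset.exists_subset_card_eq
      (show k ≤ (Finset.univ : Finset (Fin n)).card by
        rw [Finset.card_univ, Fintype.card_fin]; omega)
    set B0 : Matrix (Fin k) (Fin k) K := Matrix.of fun i j : Fin k =>
      G i (((I0.orderIsoOfFin hI0 j : I0) : Fin n)) with hB0def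
    have hB0 : IsUnit B0.det := isUnit_iff_ne_zero.mpr (hdetne I0 hI0)
    set i0 : Fin k := ⟨h, hh⟩ with hi0
    set xr : Fin k → K := Matrix.vecMul ((Pi.single i0 (1:K) : Fin k → K)) B0⁻¹ with hxr
    have hx1 : Matrix.vecMul xr B0 = (Pi.single i0 (1:K) : Fin k → K) := by
      rw [hxr, Matrix.vecMul_vecMul, Matrix.nonsing_inv_mul _ hB0, Matrix.vecMul_one]
    have hc0I : ∀ j : Fin k,
        Matrix.vecMul xr G (((I0.orderIsoOfFin hI0 j : I0) : Fin n)) = (Pi.single i0 (1:K) : Fin k → K) j := by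
      intro j
      have := congrFun hx1 j
      simpa [Matrix.vecMul, dotProduct, hB0def] using this
    have hc0ne : Matrix.vecMul xr G ≠ 0 := by
      intro h0
      have h1 := hc0I i0
      rw [h0] at h1
      simp [Pi.single_eq_same] at h1
    have hub : hammingNorm (Matrix.vecMul xr G) ≤ n - k + 1 := by
      have hsub : ({j | Matrix.vecMul xr G j ≠ 0} : Finset (Fin n)) ⊆
          (I0.erase (((I0.orderIsoOfFin hI0 i0 : I0) : Fin n)))ᶜ := by
        intro j' hj'
        simp only [Finset.mem_filter, Finset.mem_univ, true_and] at hj'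
        rw [Finset.mem_compl]
        intro hmem
        have hj'I : j' ∈ I0 := Finset.mem_of_mem_erase hmem
        have hne' : j' ≠ ((I0.orderIsoOfFin hI0 i0 : I0) : Fin n) :=
          Finset.ne_of_mem_erase hmem
        obtain ⟨j, hj⟩ := hsurjI I0 hI0 j' hj'I
        have hji0 : j ≠ i0 := by
          intro hji0
          exact hne' (by rw [← hj, hji0])
        apply hj'
        rw [← hj, hc0I j]
        exact Pi.single_eq_of_ne hji0 1
      calc hammingNorm (Matrix.vecMul xr G)
          ≤ ((I0.erase (((I0.orderIsoOfFin hI0 i0 : I0) : Fin n)))ᶜ).card :=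
            Finset.card_le_card hsub
        _ = n - (k - 1) := by
            rw [Finset.card_compl, Finset.card_erase_of_mem (hmemI I0 hI0 i0), hI0,
              Fintype.card_fin]
        _ = n - k + 1 := by omega
    have hlb : n - k + 1 ≤ hammingNorm (Matrix.vecMul xr G) := hlow xr hc0ne
    have heq : hammingNorm (Matrix.vecMul xr G) = n - k + 1 := le_antisymm hub hlb
    apply le_antisymm
    · exact Nat.sInf_le ⟨Matrix.vecMul xr G, (hspan_iff _).mpr ⟨xr, rfl⟩, hc0ne, heq.symm⟩
    · refine le_csInf ⟨_, ⟨Matrix.vecMul xr G, (hspan_iff _).mpr ⟨xr, rfl⟩, hc0ne, heq.symm⟩⟩ ?_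
      rintro w ⟨c, hcmem, hcne, rfl⟩
      obtain ⟨x, rfl⟩ := (hspan_iff c).mp hcmem
      exact hlow x hcne
end

section
/- Let q be a prime power, s | m with n ≤ s and F_q ⊊ F_{q^s} ⊊ F_{q^m}. Let k < n, α_1,...,α_n ∈ F_{q^s} linearly independent over F_q, ℓ ≤ n-k, 0 ≤ h ≤ k-1, 0 ≤ t₁ < ... < t_ℓ ≤ n-k-1, and suppose η = (η₁,...,η_ℓ) ∈ F_{q^m}^ℓ is 1-F_{q^s}-sum-product free, i.e., ∑_{i=1}^ℓ a_i η_i ∉ F_{q^s}* for all a₁,...,a_ℓ ∈ F_{q^s}. Then the twisted Gabidulin code C₃ with ℓ twists, generated by the Moore rows (α_j^{q^i})_j for i ≠ h plus the row (α_j^{q^h} + ∑_{i=1}^ℓ η_i α_j^{q^{k+t_i}})_j, is MRD. -/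
set_option linter.unusedSectionVars false
set_option linter.unusedVariables false

open Finset

section Aux

variable {Fq K : Type*} [Field Fq] [Fintype Fq] [Field K] [Fintype K] [Algebra Fq K]

/-- Evaluation of a linearized polynomial with coefficients `a` (truncated at `N`). -/
noncomputable def qE (q N : ℕ) (a : ℕ → K) (x : K) : K :=
  ∑ i ∈ Finset.range N, a i * x ^ q ^ i

lemma qE_congr {q N M : ℕ} {a : ℕ → K} (hNM : N ≤ M) (hb : ∀ i, N ≤ i → a i = 0) (x : K) :
    qE q M a x = qE q N a x := by
  refine (Finset.sum_subset (Finset.range_subset_range.2 hNM) ?_).symm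
  intro i _ hi
  rw [hb i (by simpa using hi), zero_mul]

lemma qE_coeff_add (q N : ℕ) (a b : ℕ → K) (x : K) :
    qE q N (fun i => a i + b i) x = qE q N a x + qE q N b x := by
  simp [qE, add_mul, Finset.sum_add_distrib]

variable (p e : ℕ) [Fact p.Prime] [CharP K p]

lemma qE_add {q : ℕ} (hq : q = p ^ e) (N : ℕ) (a : ℕ → K) (x y : K) :
    qE q N a (x + y) = qE q N a x + qE q N a y := by
  subst hq
  simp only [qE, ← pow_mul, add_pow_char_pow, mul_add, Finset.sum_add_distrib]

lemma qE_smul {q : ℕ} (hq : q = p ^ e) (hcard : Fintype.card Fq = q) (N : ℕ) (a : ℕ → K)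
    (c : Fq) (x : K) : qE q N a (c • x) = c • qE q N a x := by
  have hc : ∀ i : ℕ, (algebraMap Fq K c) ^ q ^ i = algebraMap Fq K c := by
    intro i
    rw [← map_pow]
    congr 1
    have := FiniteField.pow_card_pow (K := Fq) i c
    rwa [hcard] at this
  simp only [Algebra.smul_def, qE, Finset.mul_sum]
  refine Finset.sum_congr rfl fun i _ => ?_
  rw [mul_pow, hc]
  ring

/-- The linearized evaluation as an `Fq`-linear map. -/
noncomputable def qEL (q N : ℕ) (a : ℕ → K) {p e : ℕ} [Fact p.Prime] [CharP K p]
    (hq : q = p ^ e) (hcard : Fintype.card Fq = q) : K →ₗ[Fq] K where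
  toFun := qE q N a
  map_add' := qE_add p e hq N a
  map_smul' := qE_smul p e hq hcard N a

@[simp] lemma qEL_apply {q N : ℕ} {a : ℕ → K} {p e : ℕ} [Fact p.Prime] [CharP K p]
    (hq : q = p ^ e) (hcard : Fintype.card Fq = q) (x : K) :
    qEL q N a hq hcard x = qE q N a x := rfl

lemma qE_pow {q : ℕ} (hq : q = p ^ e) (N : ℕ) (a : ℕ → K) (x : K) (t : ℕ) :
    (qE q N a x) ^ q ^ t = ∑ i ∈ Finset.range N, (a i) ^ q ^ t * x ^ q ^ (i + t) := by
  subst hq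
  rw [qE, ← pow_mul, sum_pow_char_pow]
  refine Finset.sum_congr rfl fun i _ => ?_
  have hx : (p ^ e) ^ i * p ^ (e * t) = (p ^ e) ^ (i + t) := by
    rw [← pow_mul, ← pow_mul, ← pow_add]; ring_nf
  rw [mul_pow, ← pow_mul, hx]

lemma qE_exists_poly {q : ℕ} (hq2 : 1 < q) (N : ℕ) (a : ℕ → K) (d : ℕ) (hd : d < N)
    (had : a d ≠ 0) (htop : ∀ i, d < i → a i = 0) :
    ∃ P : Polynomial K, P ≠ 0 ∧ P.natDegree ≤ q ^ d ∧ ∀ x, P.eval x = qE q N a x := by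
  refine ⟨∑ i ∈ Finset.range N, Polynomial.C (a i) * Polynomial.X ^ q ^ i, ?_, ?_, ?_⟩
  · intro h0
    have hc : (∑ i ∈ Finset.range N, Polynomial.C (a i) * Polynomial.X ^ q ^ i).coeff (q ^ d)
        = a d := by
      rw [Polynomial.finset_sum_coeff, Finset.sum_eq_single d]
      · simp [Polynomial.coeff_C_mul, Polynomial.coeff_X_pow]
      · intro i _ hne
        simp only [Polynomial.coeff_C_mul, Polynomial.coeff_X_pow]
        rw [if_neg, mul_zero]
        exact fun hpow => hne (Nat.pow_right_injective hq2 hpow.symm)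
      · intro hd'; exact absurd (Finset.mem_range.2 hd) hd'
    rw [h0] at hc
    simp only [Polynomial.coeff_zero] at hc
    exact had hc.symm
  · apply Polynomial.natDegree_sum_le_of_forall_le
    intro i _
    rcases le_or_gt i d with hie | hie
    · exact (Polynomial.natDegree_C_mul_le _ _).trans
        ((Polynomial.natDegree_X_pow_le _).trans (Nat.pow_le_pow_right hq2.le hie))
    · rw [htop i hie]; simp
  · intro x
    rw [Polynomial.eval_finset_sum]
    exact Finset.sum_congr rfl fun i _ => by simp [qE]

lemma finrank_ker_qEL_le {q : ℕ} {p e : ℕ} [Fact p.Prime] [CharP K p] (hq : q = p ^ e)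
    (hcard : Fintype.card Fq = q) (N : ℕ) (a : ℕ → K) (d : ℕ) (hd : d < N) (had : a d ≠ 0)
    (htop : ∀ i, d < i → a i = 0) :
    Module.finrank Fq (LinearMap.ker (qEL q N a hq hcard)) ≤ d := by
  classical
  have hq2 : 1 < q := hcard ▸ Fintype.one_lt_card
  obtain ⟨P, hP0, hPdeg, hPev⟩ := qE_exists_poly hq2 N a d hd had htop
  set S := LinearMap.ker (qEL (Fq := Fq) q N a hq hcard) with hS
  haveI : Fintype S := Fintype.ofFinite S
  have hroots : ∀ x : K, x ∈ S → x ∈ P.roots.toFinset := by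
    intro x hx
    rw [Multiset.mem_toFinset, Polynomial.mem_roots hP0, Polynomial.IsRoot, hPev]
    exact hx
  have hcardS : Fintype.card S ≤ q ^ d := by
    have h1 := Fintype.card_le_of_injective
      (fun x : S => (⟨x.1, hroots x.1 x.2⟩ : {y // y ∈ P.roots.toFinset}))
      (by intro u v huv; ext; simpa using congrArg Subtype.val huv)
    refine h1.trans ?_
    rw [Fintype.card_coe]
    exact (Multiset.toFinset_card_le _).trans ((Polynomial.card_roots' P).trans hPdeg)
  have hcs : Fintype.card S = q ^ Module.finrank Fq S := by
    rw [← hcard]; exact Module.card_eq_pow_finrank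
  rw [hcs] at hcardS
  exact (Nat.pow_le_pow_iff_right hq2).1 hcardS

lemma qE_coeffs_eq_zero {q : ℕ} (hq2 : 1 < q) (N : ℕ) (hN : q ^ N ≤ Fintype.card K)
    (a : ℕ → K) (hbd : ∀ i, N ≤ i → a i = 0) (h0 : ∀ x : K, qE q N a x = 0) : ∀ i, a i = 0 := by
  by_contra hcon
  push_neg at hcon
  obtain ⟨i0, hi0⟩ := hcon
  classical
  set s := (Finset.range N).filter (fun i => a i ≠ 0) with hs
  have hne : s.Nonempty := ⟨i0, Finset.mem_filter.2 ⟨Finset.mem_range.2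
    (by by_contra hcc; exact hi0 (hbd i0 (le_of_not_gt hcc))), hi0⟩⟩
  set d := s.max' hne with hdd
  have hd : d ∈ s := s.max'_mem hne
  have hdN : d < N := Finset.mem_range.1 (Finset.mem_filter.1 hd).1
  have had : a d ≠ 0 := (Finset.mem_filter.1 hd).2
  have htop : ∀ i, d < i → a i = 0 := by
    intro i hi
    by_contra hai
    have hiN : i < N := by by_contra hcc; exact hai (hbd i (le_of_not_gt hcc))
    exact absurd (s.le_max' i (Finset.mem_filter.2 ⟨Finset.mem_range.2 hiN, hai⟩)) (not_le.2 hi)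
  obtain ⟨P, hP0, hPdeg, hPev⟩ := qE_exists_poly hq2 N a d hdN had htop
  have hcK : Fintype.card K ≤ q ^ d := by
    have hsub : (Finset.univ : Finset K) ⊆ P.roots.toFinset := fun x _ =>
      Multiset.mem_toFinset.2 ((Polynomial.mem_roots hP0).2
        (by rw [Polynomial.IsRoot, hPev]; exact h0 x))
    calc Fintype.card K = (Finset.univ : Finset K).card := (Finset.card_univ).symm
    _ ≤ _ := Finset.card_le_card hsub
    _ ≤ q ^ d := (Multiset.toFinset_card_le _).trans ((Polynomial.card_roots' P).trans hPdeg)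
  have h2 := (Nat.pow_le_pow_iff_right hq2).1 (le_trans hN hcK)
  omega

/-- Convolution of coefficients: the coefficients of the composition `hc ∘ g`. -/
noncomputable def qconv (q D kk : ℕ) (hc g : ℕ → K) (d : ℕ) : K :=
  ∑ j ∈ Finset.range D, hc j * (if j ≤ d ∧ d - j ≤ kk then g (d - j) ^ q ^ j else 0)

lemma qconv_bound (q D kk : ℕ) (hc g : ℕ → K) (d : ℕ) (hd : D + kk ≤ d) :
    qconv q D kk hc g d = 0 := by
  rw [qconv]
  refine Finset.sum_eq_zero fun j hj => ?_
  rw [Finset.mem_range] at hj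
  rw [if_neg (by omega), mul_zero]

lemma qconv_single (q kk : ℕ) (c : K) (g : ℕ → K) (J d : ℕ) :
    qconv q (J + 1) kk (fun j => if j = J then c else 0) g d
      = c * (if J ≤ d ∧ d - J ≤ kk then g (d - J) ^ q ^ J else 0) := by
  rw [qconv, Finset.sum_eq_single J]
  · simp
  · intro j _ hne; simp [hne]
  · intro hJ; exact absurd (Finset.mem_range.2 (by omega)) hJ

lemma qE_qconv {q : ℕ} (hq : q = p ^ e) (D kk : ℕ) (hc g : ℕ → K) (x : K) :
    qE q (D + kk) (qconv q D kk hc g) x = qE q D hc (qE q (kk + 1) g x) := by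
  classical
  have inner : ∀ j ∈ Finset.range D,
      (∑ d ∈ Finset.range (D + kk),
          (if j ≤ d ∧ d - j ≤ kk then g (d - j) ^ q ^ j else 0) * x ^ q ^ d)
        = ∑ i ∈ Finset.range (kk + 1), g i ^ q ^ j * x ^ q ^ (i + j) := by
    intro j hj
    rw [Finset.mem_range] at hj
    set F : ℕ → K := fun d =>
      (if j ≤ d ∧ d - j ≤ kk then g (d - j) ^ q ^ j else 0) * x ^ q ^ d with hF
    have h1 : ∑ d ∈ Finset.range (D + kk), F d = ∑ d ∈ Finset.Ico j (j + (kk + 1)), F d := by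
      refine (Finset.sum_subset ?_ ?_).symm
      · intro d hd
        rw [Finset.mem_Ico] at hd
        rw [Finset.mem_range]
        omega
      · intro d _ hd
        rw [Finset.mem_Ico] at hd
        rw [hF]
        simp only
        rw [if_neg (by omega), zero_mul]
    rw [h1, Finset.sum_Ico_eq_sum_range]
    have h2 : j + (kk + 1) - j = kk + 1 := by omega
    rw [h2]
    refine Finset.sum_congr rfl fun i hi => ?_
    rw [Finset.mem_range] at hi
    rw [hF]
    simp only
    rw [if_pos (by omega)]
    have h3 : j + i - j = i := by omega
    rw [h3, Nat.add_comm j i]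
  rw [qE]
  simp only [qconv, Finset.sum_mul]
  rw [Finset.sum_comm, qE]
  refine Finset.sum_congr rfl fun j hj => ?_
  rw [qE_pow p e hq, ← inner j hj, Finset.mul_sum]
  exact Finset.sum_congr rfl fun d _ => by ring

theorem qdiv {q : ℕ} (hq : q = p ^ e) (kk : ℕ) (g : ℕ → K) (hg1 : g kk = 1)
    (hgb : ∀ i, kk < i → g i = 0) :
    ∀ N, ∀ a : ℕ → K, (∀ i, N ≤ i → a i = 0) → ∃ hc r : ℕ → K,
      (∀ j, N - kk ≤ j → hc j = 0) ∧ (∀ i, kk ≤ i → r i = 0) ∧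
      ∀ x, qE q N a x = qE q (N - kk) hc (qE q (kk + 1) g x) + qE q kk r x := by
  intro N
  induction N using Nat.strong_induction_on with
  | _ N IH =>
    intro a ha
    rcases le_or_gt N kk with hNk | hNk
    · refine ⟨0, a, fun j _ => rfl, fun i hi => ha i (le_trans hNk hi), fun x => ?_⟩
      rw [qE_congr hNk ha x]
      simp [qE]
    · set M := N - 1 with hM
      have hNM : N = M + 1 := by omega
      have hkM : kk ≤ M := by omega
      set c := a M with hc0
      set hs : ℕ → K := fun j => if j = M - kk then c else 0 with hhs
      set cv : ℕ → K := qconv q (M - kk + 1) kk hs g with hcv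
      set a' : ℕ → K := fun i => a i - cv i with ha'def
      have hcv_eq : ∀ d, cv d = c * (if M - kk ≤ d ∧ d - (M - kk) ≤ kk
          then g (d - (M - kk)) ^ q ^ (M - kk) else 0) := fun d => qconv_single q kk c g _ d
      have ha' : ∀ i, M ≤ i → a' i = 0 := by
        intro i hi
        by_cases hMi : i = M
        · show a i - cv i = 0
          rw [hMi, hcv_eq, if_pos (by omega)]
          have hx1 : M - (M - kk) = kk := by omega
          rw [hx1, hg1, one_pow, mul_one, hc0, sub_self]
        · show a i - cv i = 0
          rw [hcv_eq, if_neg (by omega), mul_zero, sub_zero]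
          exact ha i (by omega)
      obtain ⟨hc', r', hb1, hb2, hev⟩ := IH M (by omega) a' (fun i hi => ha' i hi)
      refine ⟨fun j => hc' j + hs j, r', ?_, hb2, ?_⟩
      · intro j hj
        have h1 : hc' j = 0 := hb1 j (by omega)
        have h2 : hs j = 0 := by show (if j = M - kk then c else 0) = 0; rw [if_neg (by omega)]
        show hc' j + hs j = 0
        rw [h1, h2, add_zero]
      · intro x
        have split : qE q N a x = qE q N a' x + qE q N cv x := by
          have : a = fun i => a' i + cv i := by
            funext i; rw [ha'def]; ring
          rw [this, qE_coeff_add]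
        have e1 : qE q N a' x = qE q M a' x := qE_congr (by omega) ha' x
        have e2 : qE q N cv x = qE q (M - kk + 1) hs (qE q (kk + 1) g x) := by
          have hN2 : N = (M - kk + 1) + kk := by omega
          rw [hN2, qE_qconv p e hq]
        have e3 : qE q (N - kk) (fun j => hc' j + hs j) (qE q (kk + 1) g x)
            = qE q (M - kk) hc' (qE q (kk + 1) g x)
              + qE q (M - kk + 1) hs (qE q (kk + 1) g x) := by
          have hN3 : N - kk = M - kk + 1 := by omega
          rw [hN3, qE_coeff_add]
          congr 1
          exact qE_congr (by omega) hb1 _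
        rw [split, e1, hev x, e2, e3]
        ring

theorem qann {q : ℕ} (hq : q = p ^ e) (hq2 : 1 < q)
    {Fs : Type*} [Field Fs] [Algebra Fs K] :
    ∀ (u : ℕ) (v : ℕ → K), (∀ i, v i ∈ Set.range (algebraMap Fs K)) →
    ∃ g : ℕ → K, g u = 1 ∧ (∀ i, u < i → g i = 0) ∧
      (∀ i, g i ∈ Set.range (algebraMap Fs K)) ∧ ∀ i, i < u → qE q (u + 1) g (v i) = 0 := by
  intro u
  induction u with
  | zero =>
    intro v _
    refine ⟨fun i => if i = 0 then 1 else 0, by simp,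
      fun i hi => by show (if i = 0 then (1:K) else 0) = 0; rw [if_neg (by omega)],
      fun i => ?_, fun i hi => by omega⟩
    show (if i = 0 then (1:K) else 0) ∈ Set.range (algebraMap Fs K)
    by_cases hi : i = 0
    · rw [if_pos hi]; exact ⟨1, by simp⟩
    · rw [if_neg hi]; exact ⟨0, by simp⟩
  | succ u IHu =>
    intro v hv
    obtain ⟨g, hg1, hgb, hgr, hgv⟩ := IHu v hv
    set w : K := qE q (u + 1) g (v u) with hw
    have hwr : w ∈ Set.range (algebraMap Fs K) := by
      have : w ∈ (algebraMap Fs K).range := by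
        rw [hw, qE]
        apply Subring.sum_mem
        intro i _
        exact Subring.mul_mem _ (RingHom.mem_range.mpr (hgr i))
          (Subring.pow_mem _ (RingHom.mem_range.mpr (hv u)) _)
      exact RingHom.mem_range.mp this
    set g' : ℕ → K := fun i => (if 1 ≤ i then g (i - 1) ^ q else 0) - w ^ (q - 1) * g i
      with hg'
    have heval : ∀ x : K, qE q (u + 2) g' x
        = (qE q (u + 1) g x) ^ q - w ^ (q - 1) * qE q (u + 1) g x := by
      intro x
      rw [qE]
      have hsplit : ∀ i : ℕ, g' i * x ^ q ^ i
          = (if 1 ≤ i then g (i - 1) ^ q else 0) * x ^ q ^ i - w ^ (q - 1) * (g i * x ^ q ^ i) := by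
        intro i; rw [hg']; ring
      simp only [hsplit]
      rw [Finset.sum_sub_distrib, ← Finset.mul_sum]
      have h2 : (∑ i ∈ Finset.range (u + 2), g i * x ^ q ^ i) = qE q (u + 1) g x := by
        rw [← qE]
        exact qE_congr (by omega) (fun i hi => hgb i (by omega)) x
      rw [h2]
      congr 1
      rw [Finset.sum_range_succ']
      have h3 : ∀ i ∈ Finset.range (u + 1),
          (if 1 ≤ i + 1 then g (i + 1 - 1) ^ q else 0) * x ^ q ^ (i + 1)
            = g i ^ q ^ 1 * x ^ q ^ (i + 1) := by
        intro i _
        rw [if_pos (by omega), pow_one]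
        simp
      rw [Finset.sum_congr rfl h3]
      have h4 := qE_pow p e hq (u + 1) g x 1
      rw [pow_one] at h4
      rw [h4]
      simp [pow_one]
    refine ⟨g', ?_, ?_, ?_, ?_⟩
    · rw [hg']
      simp only
      rw [if_pos (by omega)]
      have : u + 1 - 1 = u := by omega
      rw [this, hg1, one_pow, hgb (u + 1) (by omega), mul_zero, sub_zero]
    · intro i hi
      rw [hg']
      simp only
      rw [if_pos (by omega), hgb (i - 1) (by omega), hgb i (by omega),
        zero_pow (by omega : q ≠ 0), mul_zero, sub_zero]
    · intro i
      have h5 : g' i ∈ (algebraMap Fs K).range := by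
        show (if 1 ≤ i then g (i - 1) ^ q else 0) - w ^ (q - 1) * g i ∈ _
        refine Subring.sub_mem _ ?_ (Subring.mul_mem _
          (Subring.pow_mem _ (RingHom.mem_range.mpr hwr) _)
          (RingHom.mem_range.mpr (hgr i)))
        by_cases h1i : 1 ≤ i
        · rw [if_pos h1i]
          exact Subring.pow_mem _ (RingHom.mem_range.mpr (hgr (i - 1))) _
        · rw [if_neg h1i]; exact Subring.zero_mem _
      exact RingHom.mem_range.mp h5
    · intro i hi
      rcases lt_or_eq_of_le (by omega : i ≤ u) with hiu | rfl
      · rw [heval (v i), hgv i hiu]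
        rw [zero_pow (by omega : q ≠ 0), mul_zero, sub_zero]
      · rw [heval (v i), ← hw]
        have : w ^ (q - 1) * w = w ^ q := by
          rw [← pow_succ]
          congr 1
          omega
        rw [this, sub_self]

lemma qE_zero {q N : ℕ} (hq0 : q ≠ 0) (a : ℕ → K) : qE q N a 0 = 0 := by
  rw [qE]
  refine Finset.sum_eq_zero fun i _ => ?_
  rw [zero_pow (pow_ne_zero i hq0), mul_zero]

lemma qE_coeff_sub (q N : ℕ) (a b : ℕ → K) (x : K) :
    qE q N (fun i => a i - b i) x = qE q N a x - qE q N b x := by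
  simp [qE, sub_mul, Finset.sum_sub_distrib]

lemma exists_top_index {a : ℕ → K} {N : ℕ} (hbd : ∀ i, N ≤ i → a i = 0) (hne : ∃ i, a i ≠ 0) :
    ∃ d, d < N ∧ a d ≠ 0 ∧ ∀ i, d < i → a i = 0 := by
  classical
  obtain ⟨i0, hi0⟩ := hne
  set s := (Finset.range N).filter (fun i => a i ≠ 0) with hs
  have hnes : s.Nonempty := ⟨i0, Finset.mem_filter.2 ⟨Finset.mem_range.2
    (by by_contra hcc; exact hi0 (hbd i0 (le_of_not_gt hcc))), hi0⟩⟩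
  refine ⟨s.max' hnes, Finset.mem_range.1 (Finset.mem_filter.1 (s.max'_mem hnes)).1,
    (Finset.mem_filter.1 (s.max'_mem hnes)).2, ?_⟩
  intro i hi
  by_contra hai
  have hiN : i < N := by by_contra hcc; exact hai (hbd i (le_of_not_gt hcc))
  exact absurd (s.le_max' i (Finset.mem_filter.2 ⟨Finset.mem_range.2 hiN, hai⟩)) (not_le.2 hi)

end Aux

open Finset

/-- with evaluation points in an intermediate subfield `F_{q^s}` (`n ≤ s`) and a
twist vector `η = (η₁,…,η_ℓ)` that is `1`-`F_{q^s}`-sum-product free (no `F_{q^s}`-linear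
combination of the `η_i` lies in `F_{q^s}*`), the twisted Gabidulin code `C₃` with `ℓ`
twists is MRD. -/
theorem C3_sum_product_free_MRD {Fq Fs K : Type*} [Field Fq] [Fintype Fq] [Field Fs] [Fintype Fs]
    [Field K] [Fintype K] [Algebra Fq Fs] [Algebra Fs K] [Algebra Fq K] [IsScalarTower Fq Fs K]
    (q s m n k h ℓ : ℕ) (hq : Fintype.card Fq = q) (hFs : Fintype.card Fs = q ^ s)
    (hK : Fintype.card K = q ^ m) (hs1 : 1 < s) (hsm : s < m) (hsd : s ∣ m)
    (hns : n ≤ s) (hkn : k < n) (hh : h < k) (hℓ : ℓ ≤ n - k)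
    (t : Fin ℓ → ℕ) (htmono : StrictMono t) (htub : ∀ i, t i ≤ n - k - 1)
    (β : ℕ → Fs) (hβ : LinearIndependent Fq (fun i : Fin n => β (i:ℕ)))
    (η : Fin ℓ → K) (hη : ∀ i, η i ≠ 0)
    (hfree : ∀ a : Fin ℓ → Fs,
      (∑ i, algebraMap Fs K (a i) * η i) = 0 ∨
        (∑ i, algebraMap Fs K (a i) * η i) ∉ Set.range (algebraMap Fs K)) :
    sInf {w : ℕ | ∃ c ∈ Submodule.span K (Set.range (fun i : Fin k => fun j : Fin n =>
          if (i:ℕ) = h then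
            algebraMap Fs K (β (j:ℕ)) ^ q ^ h +
              ∑ r : Fin ℓ, η r * algebraMap Fs K (β (j:ℕ)) ^ q ^ (k + t r)
          else algebraMap Fs K (β (j:ℕ)) ^ q ^ (i:ℕ))),
        c ≠ 0 ∧ w = Module.finrank Fq (Submodule.span Fq (Set.range c))} = n - k + 1 := by
  classical
  -- characteristic setup
  haveI : CharP Fq (ringChar Fq) := ringChar.charP Fq
  obtain ⟨e, hp, hqe'⟩ := FiniteField.card Fq (ringChar Fq)
  set p := ringChar Fq with hpdef
  haveI : Fact p.Prime := ⟨hp⟩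
  have hqe : q = p ^ (e : ℕ) := by rw [← hq, hqe']
  haveI : CharP K p := charP_of_injective_algebraMap (algebraMap Fq K).injective p
  have hq2 : 1 < q := hq ▸ Fintype.one_lt_card
  have hktr : ∀ r : Fin ℓ, k + t r < n := fun r => by have := htub r; omega
  haveI : Nonempty (Fin n) := ⟨⟨0, by omega⟩⟩
  -- notation
  set α : Fin n → K := fun j => algebraMap Fs K (β (j:ℕ)) with hαdef
  set G : Fin k → Fin n → K := fun i => fun j =>
      if (i:ℕ) = h then
        α j ^ q ^ h + ∑ r : Fin ℓ, η r * α j ^ q ^ (k + t r)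
      else α j ^ q ^ (i:ℕ) with hGdef
  set A : (Fin k → K) → ℕ → K := fun x i =>
      (if hik : i < k then x ⟨i, hik⟩ else 0)
        + ∑ r : Fin ℓ, (if i = k + t r then x ⟨h, hh⟩ * η r else 0) with hAdef
  have hAapp : ∀ x i, A x i = (if hik : i < k then x ⟨i, hik⟩ else 0)
      + ∑ r : Fin ℓ, (if i = k + t r then x ⟨h, hh⟩ * η r else 0) := fun x i => rfl
  have hAbd : ∀ x, ∀ i, n ≤ i → A x i = 0 := by
    intro x i hi
    rw [hAapp, dif_neg (by omega), zero_add]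
    refine Finset.sum_eq_zero fun r _ => ?_
    rw [if_neg]
    have := hktr r
    omega
  -- the evaluation identity
  have hcG : ∀ (x : Fin k → K) (j : Fin n), (∑ i, x i * G i j) = qE q n (A x) (α j) := by
    intro x j
    have hGsplit : ∀ i : Fin k, G i j = α j ^ q ^ (i:ℕ)
        + (if (i:ℕ) = h then ∑ r : Fin ℓ, η r * α j ^ q ^ (k + t r) else 0) := by
      intro i
      show (if (i:ℕ) = h then α j ^ q ^ h + ∑ r : Fin ℓ, η r * α j ^ q ^ (k + t r)
          else α j ^ q ^ (i:ℕ)) = _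
      by_cases hih : (i:ℕ) = h
      · rw [if_pos hih, if_pos hih, hih]
      · rw [if_neg hih, if_neg hih, add_zero]
    have lhs_eq : (∑ i, x i * G i j) = (∑ i : Fin k, x i * α j ^ q ^ (i:ℕ))
        + ∑ r : Fin ℓ, (x ⟨h, hh⟩ * η r) * α j ^ q ^ (k + t r) := by
      have step1 : (∑ i, x i * G i j) = ∑ i : Fin k, (x i * α j ^ q ^ (i:ℕ)
          + (if (i:ℕ) = h then x i * ∑ r : Fin ℓ, η r * α j ^ q ^ (k + t r) else 0)) := by
        refine Finset.sum_congr rfl fun i _ => ?_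
        rw [hGsplit i, mul_add, mul_ite, mul_zero]
      rw [step1, Finset.sum_add_distrib]
      congr 1
      rw [Finset.sum_eq_single (⟨h, hh⟩ : Fin k)]
      · rw [if_pos rfl, Finset.mul_sum]
        exact Finset.sum_congr rfl fun r _ => by ring
      · intro i _ hne
        rw [if_neg (fun hih => hne (Fin.ext hih))]
      · intro habs; exact absurd (Finset.mem_univ _) habs
    have rhs_eq : qE q n (A x) (α j) = (∑ i : Fin k, x i * α j ^ q ^ (i:ℕ))
        + ∑ r : Fin ℓ, (x ⟨h, hh⟩ * η r) * α j ^ q ^ (k + t r) := by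
      have split1 : qE q n (A x) (α j)
          = (∑ i ∈ Finset.range n, (if hik : i < k then x ⟨i, hik⟩ else 0) * α j ^ q ^ i)
            + ∑ i ∈ Finset.range n,
                (∑ r : Fin ℓ, if i = k + t r then x ⟨h, hh⟩ * η r else 0) * α j ^ q ^ i := by
        rw [qE, ← Finset.sum_add_distrib]
        exact Finset.sum_congr rfl fun i _ => by rw [hAapp, add_mul]
      have first : (∑ i ∈ Finset.range n, (if hik : i < k then x ⟨i, hik⟩ else 0) * α j ^ q ^ i)
          = ∑ i : Fin k, x i * α j ^ q ^ (i:ℕ) := by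
        rw [← Finset.sum_subset (Finset.range_subset_range.2 hkn.le)
          (fun i _ hi => by rw [dif_neg (by simpa using hi), zero_mul])]
        rw [← Fin.sum_univ_eq_sum_range (fun i => (if hik : i < k then x ⟨i, hik⟩ else 0) * α j ^ q ^ i) k]
        exact Finset.sum_congr rfl fun i _ => by rw [dif_pos i.2]
      have second : (∑ i ∈ Finset.range n,
            (∑ r : Fin ℓ, if i = k + t r then x ⟨h, hh⟩ * η r else 0) * α j ^ q ^ i)
          = ∑ r : Fin ℓ, (x ⟨h, hh⟩ * η r) * α j ^ q ^ (k + t r) := by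
        rw [Finset.sum_congr rfl (fun i (_ : i ∈ Finset.range n) => Finset.sum_mul ..)]
        rw [Finset.sum_comm]
        refine Finset.sum_congr rfl fun r _ => ?_
        have : ∀ i ∈ Finset.range n, (if i = k + t r then x ⟨h, hh⟩ * η r else 0) * α j ^ q ^ i
            = if i = k + t r then (x ⟨h, hh⟩ * η r) * α j ^ q ^ i else 0 := by
          intro i _
          by_cases hi : i = k + t r
          · rw [if_pos hi, if_pos hi]
          · rw [if_neg hi, if_neg hi, zero_mul]
        rw [Finset.sum_congr rfl this, Finset.sum_ite_eq' (Finset.range n) (k + t r)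
          (fun i => (x ⟨h, hh⟩ * η r) * α j ^ q ^ i), if_pos (Finset.mem_range.2 (hktr r))]
      rw [split1, first, second]
    rw [lhs_eq, rhs_eq]
  -- W and its properties
  set W : Submodule Fq K := Submodule.span Fq (Set.range α) with hWdef
  have hWrange : ∀ w : K, w ∈ W → w ∈ Set.range (algebraMap Fs K) := by
    intro w hw
    have hle : W ≤ Subalgebra.toSubmodule (IsScalarTower.toAlgHom Fq Fs K).range := by
      rw [hWdef]
      refine Submodule.span_le.2 ?_
      rintro _ ⟨j, rfl⟩
      exact ⟨β (j:ℕ), rfl⟩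
    obtain ⟨y, hy⟩ := hle hw
    exact ⟨y, hy⟩
  have hαli : LinearIndependent Fq α := by
    have hinj : Function.Injective ((IsScalarTower.toAlgHom Fq Fs K).toLinearMap) :=
      (algebraMap Fs K).injective
    exact hβ.map' (IsScalarTower.toAlgHom Fq Fs K).toLinearMap (LinearMap.ker_eq_bot.2 hinj)
  -- the key kernel bound
  have keyk : ∀ x : Fin k → K, x ≠ 0 →
      Module.finrank Fq ↥(LinearMap.ker (qEL q n (A x) hqe hq) ⊓ W) ≤ k - 1 := by
    intro x hxne
    rcases eq_or_ne (x ⟨h, hh⟩) 0 with hxh | hxh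
    · -- low degree case
      have hAbk : ∀ i, k ≤ i → A x i = 0 := by
        intro i hi
        rw [hAapp, dif_neg (by omega), zero_add]
        refine Finset.sum_eq_zero fun r _ => ?_
        by_cases hir : i = k + t r
        · rw [if_pos hir, hxh, zero_mul]
        · rw [if_neg hir]
      have hAne : ∃ i, A x i ≠ 0 := by
        have hx0 : ∃ i0 : Fin k, x i0 ≠ 0 := by
          by_contra hcc
          push_neg at hcc
          exact hxne (funext fun i0 => hcc i0)
        obtain ⟨i0, hi0⟩ := hx0
        refine ⟨(i0:ℕ), ?_⟩
        have : A x (i0:ℕ) = x i0 := by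
          rw [hAapp, dif_pos i0.2]
          rw [Finset.sum_eq_zero (fun r _ => if_neg (by have := i0.2; omega)), add_zero]
        rw [this]
        exact hi0
      obtain ⟨d, hdk, hdne, hdtop⟩ := exists_top_index hAbk hAne
      calc Module.finrank Fq ↥(LinearMap.ker (qEL q n (A x) hqe hq) ⊓ W)
          ≤ Module.finrank Fq ↥(LinearMap.ker (qEL q n (A x) hqe hq)) :=
            Submodule.finrank_mono inf_le_left
        _ ≤ d := finrank_ker_qEL_le hqe hq n (A x) d (by omega) hdne hdtop
        _ ≤ k - 1 := by omega
    · by_contra hge'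
      have hge : k ≤ Module.finrank Fq ↥(LinearMap.ker (qEL q n (A x) hqe hq) ⊓ W) := by omega
      set V : Submodule Fq K := LinearMap.ker (qEL q n (A x) hqe hq) ⊓ W with hVdef
      -- pick k independent vectors in V
      set b := Module.finBasis Fq ↥V with hbdef
      set v : ℕ → K := fun i => if hik : i < k then
          ((b ⟨i, lt_of_lt_of_le hik hge⟩ : ↥V) : K) else 0 with hvdef
      have hvmem : ∀ i, i < k → v i ∈ V := by
        intro i hik
        have : v i = ((b ⟨i, lt_of_lt_of_le hik hge⟩ : ↥V) : K) := dif_pos hik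
        rw [this]
        exact (b ⟨i, lt_of_lt_of_le hik hge⟩).2
      have hvr : ∀ i, v i ∈ Set.range (algebraMap Fs K) := by
        intro i
        by_cases hik : i < k
        · exact hWrange _ ((hvmem i hik).2)
        · have : v i = 0 := dif_neg hik
          rw [this]
          exact ⟨0, map_zero _⟩
      have hli : LinearIndependent Fq (fun i : Fin k => v (i:ℕ)) := by
        have h1 : LinearIndependent Fq (fun j : Fin (Module.finrank Fq ↥V) => ((b j : ↥V) : K)) :=
          b.linearIndependent.map' V.subtype (Submodule.ker_subtype V)
        have h2 := h1.comp (fun i : Fin k => (⟨(i:ℕ), lt_of_lt_of_le i.2 hge⟩ :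
            Fin (Module.finrank Fq ↥V)))
          (by intro i1 i2 h12; exact Fin.ext (by simpa using congrArg Fin.val h12))
        have heq : (fun i : Fin k => v (i:ℕ))
            = fun i : Fin k => ((b ⟨(i:ℕ), lt_of_lt_of_le i.2 hge⟩ : ↥V) : K) := by
          funext i
          exact dif_pos i.2
        rw [heq]
        exact h2
      set U : Submodule Fq K := Submodule.span Fq (Set.range (fun i : Fin k => v (i:ℕ)))
        with hUdef
      have hUrank : Module.finrank Fq ↥U = k := by
        rw [hUdef, finrank_span_eq_card hli, Fintype.card_fin]
      have hUker : U ≤ LinearMap.ker (qEL q n (A x) hqe hq) := by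
        rw [hUdef]
        refine Submodule.span_le.2 ?_
        rintro _ ⟨i, rfl⟩
        exact (hvmem (i:ℕ) i.2).1
      -- annihilator polynomial of U
      obtain ⟨g, hg1, hgb, hgr, hgv⟩ := qann p e hqe hq2 (Fs := Fs) k v hvr
      have hUg : U ≤ LinearMap.ker (qEL q (k+1) g hqe hq) := by
        rw [hUdef]
        refine Submodule.span_le.2 ?_
        rintro _ ⟨i, rfl⟩
        show qE q (k+1) g (v (i:ℕ)) = 0
        exact hgv (i:ℕ) i.2
      -- divide
      obtain ⟨hc, r, hbh, hbr, hev⟩ := qdiv p e hqe k g hg1 hgb n (A x) (hAbd x)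
      -- remainder vanishes
      have hrz : ∀ i, r i = 0 := by
        by_contra hcon
        push_neg at hcon
        obtain ⟨d, hdk, hdne, hdtop⟩ := exists_top_index hbr hcon
        have hUr : U ≤ LinearMap.ker (qEL q k r hqe hq) := by
          intro u hu
          have h1 : qE q n (A x) u = 0 := hUker hu
          have h2 : qE q (k+1) g u = 0 := hUg hu
          have h3 := hev u
          rw [h1, h2, qE_zero (by omega) hc] at h3
          show qE q k r u = 0
          rw [zero_add] at h3
          exact h3.symm
        have : (k:ℕ) ≤ d := by
          calc k = Module.finrank Fq ↥U := hUrank.symm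
            _ ≤ Module.finrank Fq ↥(LinearMap.ker (qEL q k r hqe hq)) :=
              Submodule.finrank_mono hUr
            _ ≤ d := finrank_ker_qEL_le hqe hq k r d hdk hdne hdtop
        omega
      -- coefficient identity
      set cv : ℕ → K := qconv q (n - k) k hc g with hcvdef
      have hgev : ∀ u : K, qE q n (A x) u = qE q n cv u := by
        intro u
        have h1 := hev u
        have h2 : qE q k r u = 0 := by
          rw [qE]
          exact Finset.sum_eq_zero fun i _ => by rw [hrz i, zero_mul]
        rw [h2, add_zero] at h1
        have h3 : qE q ((n - k) + k) cv u = qE q (n - k) hc (qE q (k+1) g u) :=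
          qE_qconv p e hqe (n - k) k hc g u
        rw [Nat.sub_add_cancel hkn.le] at h3
        rw [h1, ← h3]
      have hcoef : ∀ i, A x i = cv i := by
        have hsub0 : ∀ i, n ≤ i → A x i - cv i = 0 := fun i hi => by
          rw [hAbd x i hi, hcvdef, qconv_bound q (n-k) k hc g i (by omega), sub_zero]
        have hz := qE_coeffs_eq_zero hq2 n
          (by rw [hK]; exact Nat.pow_le_pow_right (by omega) (by omega))
          (fun i => A x i - cv i) hsub0
          (fun u => by rw [qE_coeff_sub, hgev u, sub_self])
        intro i
        have := hz i
        rwa [sub_eq_zero] at this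
      -- the sum-product-free predicate
      set Pd : K → Prop := fun y => ∃ cs : Fin ℓ → Fs,
          y = x ⟨h, hh⟩ * ∑ r : Fin ℓ, algebraMap Fs K (cs r) * η r with hPddef
      have P0 : Pd 0 := ⟨0, by simp⟩
      have Padd : ∀ y z, Pd y → Pd z → Pd (y + z) := by
        rintro y z ⟨cs1, rfl⟩ ⟨cs2, rfl⟩
        refine ⟨cs1 + cs2, ?_⟩
        rw [← mul_add, ← Finset.sum_add_distrib]
        congr 1
        refine Finset.sum_congr rfl fun r _ => ?_
        rw [Pi.add_apply, map_add]
        ring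
      have Psub : ∀ y z, Pd y → Pd z → Pd (y - z) := by
        rintro y z ⟨cs1, rfl⟩ ⟨cs2, rfl⟩
        refine ⟨cs1 - cs2, ?_⟩
        rw [← mul_sub, ← Finset.sum_sub_distrib]
        congr 1
        refine Finset.sum_congr rfl fun r _ => ?_
        rw [Pi.sub_apply, map_sub]
        ring
      have Pmul : ∀ y z, Pd y → z ∈ Set.range (algebraMap Fs K) → Pd (y * z) := by
        rintro y _ ⟨cs1, rfl⟩ ⟨z1, rfl⟩
        refine ⟨fun r => cs1 r * z1, ?_⟩
        rw [mul_assoc, Finset.sum_mul]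
        congr 1
        refine Finset.sum_congr rfl fun r _ => ?_
        rw [map_mul]
        ring
      have Pη : ∀ r : Fin ℓ, Pd (x ⟨h, hh⟩ * η r) := by
        intro r
        refine ⟨fun r' => if r' = r then 1 else 0, ?_⟩
        have hsum : ∑ r' : Fin ℓ, algebraMap Fs K (if r' = r then (1:Fs) else 0) * η r'
            = η r := by
          rw [Finset.sum_eq_single r (fun r' _ hne => by rw [if_neg hne, map_zero, zero_mul])
            (fun habs => absurd (Finset.mem_univ r) habs), if_pos rfl, map_one, one_mul]
        rw [hsum]
      have hgpowr : ∀ i tt : ℕ, g i ^ q ^ tt ∈ Set.range (algebraMap Fs K) := by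
        intro i tt
        obtain ⟨y, hy⟩ := hgr i
        exact ⟨y ^ q ^ tt, by rw [map_pow, hy]⟩
      have PA : ∀ j, j < n - k → Pd (A x (k + j)) := by
        intro j hj
        rw [hAapp, dif_neg (by omega), zero_add]
        refine Finset.sum_induction _ Pd Padd P0 fun r _ => ?_
        by_cases hr : k + j = k + t r
        · rw [if_pos hr]; exact Pη r
        · rw [if_neg hr]; exact P0
      have hPall : ∀ j, Pd (hc j) := by
        have main : ∀ T j, n - k - j ≤ T → Pd (hc j) := by
          intro T
          induction T with
          | zero =>
            intro j hj
            rw [hbh j (by omega)]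
            exact P0
          | succ T IH =>
            intro j hj
            rcases le_or_gt (n - k) j with hjge | hjlt
            · rw [hbh j hjge]; exact P0
            · have hcvkj := hcoef (k + j)
              have hiso : cv (k + j) = hc j + ∑ j' ∈ (Finset.range (n-k)).erase j,
                  hc j' * (if j' ≤ k + j ∧ k + j - j' ≤ k then g (k + j - j') ^ q ^ j' else 0) := by
                rw [hcvdef]
                show qconv q (n-k) k hc g (k+j) = _
                rw [qconv, ← Finset.add_sum_erase _ _ (Finset.mem_range.2 hjlt)]
                congr 1
                rw [if_pos ⟨by omega, by omega⟩]
                have hkj : k + j - j = k := by omega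
                rw [hkj, hg1, one_pow, mul_one]
              have hformula : hc j = A x (k + j) - ∑ j' ∈ (Finset.range (n-k)).erase j,
                  hc j' * (if j' ≤ k + j ∧ k + j - j' ≤ k then g (k + j - j') ^ q ^ j' else 0) := by
                rw [hcvkj, hiso]
                ring
              rw [hformula]
              refine Psub _ _ (PA j hjlt) ?_
              refine Finset.sum_induction _ Pd Padd P0 fun j' hj' => ?_
              rcases Finset.mem_erase.1 hj' with ⟨hne, hmem⟩
              rw [Finset.mem_range] at hmem
              by_cases hcond : j' ≤ k + j ∧ k + j - j' ≤ k
              · rw [if_pos hcond]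
                have hgt : j < j' := by omega
                exact Pmul _ _ (IH j' (by omega)) (hgpowr _ _)
              · rw [if_neg hcond, mul_zero]; exact P0
        exact fun j => main (n - k) j (by omega)
      -- final contradiction
      have hAh : A x h = x ⟨h, hh⟩ := by
        rw [hAapp, dif_pos hh]
        rw [Finset.sum_eq_zero (fun r _ => if_neg (by have := hktr r; omega)), add_zero]
      have hPxh : Pd (x ⟨h, hh⟩) := by
        rw [← hAh, hcoef h, hcvdef]
        show Pd (qconv q (n-k) k hc g h)
        rw [qconv]
        refine Finset.sum_induction _ Pd Padd P0 fun j' _ => ?_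
        by_cases hcond : j' ≤ h ∧ h - j' ≤ k
        · rw [if_pos hcond]
          exact Pmul _ _ (hPall j') (hgpowr _ _)
        · rw [if_neg hcond, mul_zero]; exact P0
      obtain ⟨cs, hcs⟩ := hPxh
      have hone : (1:K) = ∑ r : Fin ℓ, algebraMap Fs K (cs r) * η r :=
        mul_left_cancel₀ hxh (by rw [mul_one]; exact hcs)
      rcases hfree cs with h0 | hnr
      · rw [← hone] at h0
        exact one_ne_zero h0
      · exact hnr ⟨1, by rw [map_one]; exact hone⟩
  -- rank identity
  have hrank : ∀ (x : Fin k → K) (c : Fin n → K), (∀ j, c j = ∑ i, x i * G i j) →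
      Module.finrank Fq ↥(Submodule.span Fq (Set.range c))
        + Module.finrank Fq ↥(LinearMap.ker (qEL q n (A x) hqe hq) ⊓ W) = n := by
    intro x c hc
    set ψ : (Fin n → Fq) →ₗ[Fq] K := Fintype.linearCombination Fq α with hψdef
    set θ : (Fin n → Fq) →ₗ[Fq] K := Fintype.linearCombination Fq c with hθdef
    have hψinj : Function.Injective ψ := by
      rw [← LinearMap.ker_eq_bot, LinearMap.ker_eq_bot']
      intro v hv
      have := Fintype.linearIndependent_iff.1 hαli v hv
      funext i
      exact this i
    have hθcomp : θ = (qEL q n (A x) hqe hq).comp ψ := by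
      refine LinearMap.ext fun v => ?_
      show (∑ j, v j • c j) = qEL q n (A x) hqe hq (∑ j, v j • α j)
      rw [map_sum]
      refine Finset.sum_congr rfl fun j _ => ?_
      rw [map_smul, qEL_apply, ← hcG x j, ← hc j]
    have hrθ : LinearMap.range θ = Submodule.span Fq (Set.range c) :=
      Fintype.range_linearCombination Fq c
    have hrψ : LinearMap.range ψ = W := Fintype.range_linearCombination Fq α
    have hkθ : Module.finrank Fq ↥(LinearMap.ker θ)
        = Module.finrank Fq ↥(LinearMap.ker (qEL q n (A x) hqe hq) ⊓ W) := by
      have e1 : Submodule.map ψ (LinearMap.ker θ)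
          = LinearMap.ker (qEL q n (A x) hqe hq) ⊓ W := by
        rw [hθcomp, LinearMap.ker_comp, Submodule.map_comap_eq, hrψ, inf_comm]
      rw [← e1]
      exact LinearEquiv.finrank_eq (Submodule.equivMapOfInjective ψ hψinj (LinearMap.ker θ))
    have hrn := LinearMap.finrank_range_add_finrank_ker θ
    rw [hrθ, hkθ] at hrn
    rw [Module.finrank_fintype_fun_eq_card, Fintype.card_fin] at hrn
    exact hrn
  -- lower bound
  have hlow : ∀ w ∈ {w : ℕ | ∃ c ∈ Submodule.span K (Set.range G),
      c ≠ 0 ∧ w = Module.finrank Fq (Submodule.span Fq (Set.range c))}, n - k + 1 ≤ w := by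
    rintro w ⟨c, hcmem, hc0, rfl⟩
    rw [Submodule.mem_span_range_iff_exists_fun] at hcmem
    obtain ⟨x, hx⟩ := hcmem
    have hcx : ∀ j, c j = ∑ i, x i * G i j := by
      intro j
      rw [← hx]
      simp [Finset.sum_apply]
    have hxne : x ≠ 0 := by
      rintro rfl
      refine hc0 (funext fun j => ?_)
      rw [hcx j]
      simp
    have h1 := hrank x c hcx
    have h2 := keyk x hxne
    omega
  -- existence of a codeword of rank n - k + 1
  have hmem : (n - k + 1) ∈ {w : ℕ | ∃ c ∈ Submodule.span K (Set.range G),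
      c ≠ 0 ∧ w = Module.finrank Fq (Submodule.span Fq (Set.range c))} := by
    set Φ : (Fin k → K) →ₗ[K] (Fin (k-1) → K) := LinearMap.pi
      (fun j : Fin (k-1) => Fintype.linearCombination K
        (fun i : Fin k => G i ⟨(j:ℕ), by omega⟩)) with hΦdef
    have hker : ∃ x : Fin k → K, x ≠ 0 ∧ Φ x = 0 := by
      have hni : ¬ Function.Injective Φ := by
        intro hinj
        have := LinearMap.finrank_le_finrank_of_injective hinj
        rw [Module.finrank_fintype_fun_eq_card, Module.finrank_fintype_fun_eq_card,
          Fintype.card_fin, Fintype.card_fin] at this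
        omega
      have hkerne : LinearMap.ker Φ ≠ ⊥ := fun hbot => hni (LinearMap.ker_eq_bot.1 hbot)
      obtain ⟨x, hxmem, hxne⟩ := Submodule.ne_bot_iff _ |>.1 hkerne
      exact ⟨x, hxne, hxmem⟩
    obtain ⟨x, hxne, hΦx⟩ := hker
    set c : Fin n → K := fun j => ∑ i, x i * G i j with hcdef
    have hcx : ∀ j, c j = ∑ i, x i * G i j := fun j => rfl
    have hcmem : c ∈ Submodule.span K (Set.range G) := by
      rw [Submodule.mem_span_range_iff_exists_fun]
      exact ⟨x, by funext j; simp [hcdef, Finset.sum_apply]⟩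
    have hz : ∀ j : Fin n, (j:ℕ) < k - 1 → c j = 0 := by
      intro j hj
      have h1 := congr_fun hΦx ⟨(j:ℕ), hj⟩
      have h2 : Φ x ⟨(j:ℕ), hj⟩ = ∑ i, x i * G i ⟨(j:ℕ), by omega⟩ := by
        rw [hΦdef]
        simp [LinearMap.pi_apply, Fintype.linearCombination_apply, smul_eq_mul]
      rw [h2] at h1
      rw [hcx j]
      have h3 : (⟨(j:ℕ), by omega⟩ : Fin n) = j := Fin.ext rfl
      rw [h3] at h1
      exact h1
    have h1 := hrank x c hcx
    have h2 := keyk x hxne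
    have hge : n - k + 1 ≤ Module.finrank Fq (Submodule.span Fq (Set.range c)) := by omega
    -- upper bound on the rank
    set c' : Fin (n - k + 1) → K := fun j => c ⟨k - 1 + (j:ℕ), by omega⟩ with hc'def
    have hsub : Set.range c ⊆ ↑(Submodule.span Fq (Set.range c')) := by
      rintro _ ⟨j, rfl⟩
      rcases lt_or_ge (j:ℕ) (k-1) with hj | hj
      · rw [hz j hj]
        exact (Submodule.span Fq (Set.range c')).zero_mem
      · have hjj : c j = c' ⟨(j:ℕ) - (k-1), by omega⟩ := by
          rw [hc'def]
          show c j = c ⟨k - 1 + ((j:ℕ) - (k-1)), _⟩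
          congr 1
          exact Fin.ext (by simp; omega)
        rw [hjj]
        exact Submodule.subset_span ⟨_, rfl⟩
    have hup : Module.finrank Fq (Submodule.span Fq (Set.range c)) ≤ n - k + 1 := by
      calc Module.finrank Fq ↥(Submodule.span Fq (Set.range c))
          ≤ Module.finrank Fq ↥(Submodule.span Fq (Set.range c')) :=
            Submodule.finrank_mono (Submodule.span_le.2 hsub)
        _ ≤ (Set.range c').toFinset.card := finrank_span_le_card _
        _ ≤ n - k + 1 := by
            rw [Set.toFinset_card]
            exact (Fintype.card_range_le c').trans (by simp)
    have hcne : c ≠ 0 := by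
      intro hceq
      have : Module.finrank Fq (Submodule.span Fq (Set.range c)) = 0 := by
        rw [hceq]
        have : Set.range (0 : Fin n → K) = {0} := by
          ext y
          simp [Set.range_const]
        rw [this, Submodule.span_zero_singleton, finrank_bot]
      omega
    exact ⟨c, hcmem, hcne, le_antisymm hge (by omega) |>.symm ▸ rfl⟩
  exact le_antisymm (Nat.sInf_le hmem) (le_csInf ⟨_, hmem⟩ hlow)
end
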